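/- arXiv:1907.12276 — 6 statements merged into one kernel-verified Lean document; each statement's English description precedes it below -/
import Mathlib

section
/- For every finite simple graph G, the game chromatic number of G is at most the game coloring number of G, i.e., χ_g(G) ≤ col_g(G). -/
open scoped Classical

namespace ConnGame

variable {V : Type*}

/-- A move `(v, a)` is proper at the partial coloring `c`: `v` is uncolored and
no neighbor of `v` already has color `a`. -/
def ProperMove (G : SimpleGraph V) {k : ℕ} (c : V → Option (Fin k)) (v : V) (a : Fin k) : Prop :=
  c v = none ∧ ∀ u, G.Adj v u → c u ≠ some a

/-- Connectivity condition on a move: either no vertex is colored yet (first move),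
or the chosen vertex has at least one colored neighbor.  This guarantees that the set
of colored vertices induces a connected subgraph after each move. -/
def ConnMove (G : SimpleGraph V) {k : ℕ} (c : V → Option (Fin k)) (v : V) : Prop :=
  (∀ u, c u = none) ∨ ∃ u, G.Adj v u ∧ (c u).isSome

/-- A legal move in the coloring game (connected version when `conn = true`). -/
def LegalMove (conn : Bool) (G : SimpleGraph V) {k : ℕ}
    (c : V → Option (Fin k)) (v : V) (a : Fin k) : Prop :=
  ProperMove G c v a ∧ (conn = true → ConnMove G c v)

/-- The position obtained by coloring vertex `v` with color `a`. -/
def play [DecidableEq V] {k : ℕ} (c : V → Option (Fin k)) (v : V) (a : Fin k) :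
    V → Option (Fin k) :=
  Function.update c v (some a)

/-- Alice has a winning strategy in the (connected, if `conn`) coloring game with `k`
colors, starting from position `c`, with `n` moves remaining, where `aliceTurn` records
whose turn it is.  Alice wins exactly if all vertices eventually get colored. -/
def AliceWinsFrom [DecidableEq V] (conn : Bool) (G : SimpleGraph V) (k : ℕ) :
    ℕ → Bool → (V → Option (Fin k)) → Prop
  | 0, _, c => ∀ v, (c v).isSome
  | n + 1, aliceTurn, c =>
    (∀ v, (c v).isSome) ∨
      (if aliceTurn then
        ∃ v a, LegalMove conn G c v a ∧ AliceWinsFrom conn G k n false (play c v a)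
      else
        (∃ v a, LegalMove conn G c v a) ∧
          ∀ v a, LegalMove conn G c v a → AliceWinsFrom conn G k n true (play c v a))

/-- Bob has a winning strategy in the (connected, if `conn`) coloring game with `k`
colors, from position `c` with `n` moves remaining.  Bob wins exactly if the game ends
(no legal move is available) while some vertex is still uncolored. -/
def BobWinsFrom [DecidableEq V] (conn : Bool) (G : SimpleGraph V) (k : ℕ) :
    ℕ → Bool → (V → Option (Fin k)) → Prop
  | 0, _, c => ∃ v, c v = none
  | n + 1, aliceTurn, c =>
    (∃ v, c v = none) ∧
      (if aliceTurn then
        ∀ v a, LegalMove conn G c v a → BobWinsFrom conn G k n false (play c v a)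
      else
        (¬ ∃ v a, LegalMove conn G c v a) ∨
          ∃ v a, LegalMove conn G c v a ∧ BobWinsFrom conn G k n true (play c v a))

/-- Alice has a winning strategy in the (connected, if `conn`) coloring game on `G`
with `k` colors (Alice moves first, starting from the all-uncolored position). -/
def AliceWinsColoringGame [Fintype V] [DecidableEq V] (conn : Bool) (G : SimpleGraph V)
    (k : ℕ) : Prop :=
  AliceWinsFrom conn G k (Fintype.card V) true fun _ => none

/-- Bob has a winning strategy in the (connected, if `conn`) coloring game on `G`
with `k` colors. -/
def BobWinsColoringGame [Fintype V] [DecidableEq V] (conn : Bool) (G : SimpleGraph V)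
    (k : ℕ) : Prop :=
  BobWinsFrom conn G k (Fintype.card V) true fun _ => none

/-- The game chromatic number: the least `k` such that Alice wins the coloring game
on `G` with `k` colors. -/
noncomputable def gameChromaticNumber [Fintype V] [DecidableEq V] (G : SimpleGraph V) : ℕ :=
  sInf {k | AliceWinsColoringGame false G k}

/-- The connected game chromatic number: the least `k` such that Alice wins the
connected coloring game on `G` with `k` colors. -/
noncomputable def connGameChromaticNumber [Fintype V] [DecidableEq V] (G : SimpleGraph V) : ℕ :=
  sInf {k | AliceWinsColoringGame true G k}

/-- A legal move in the marking game (connected version when `conn = true`):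
mark an unmarked vertex, which (in the connected game) must have a marked neighbor
unless no vertex is marked yet. -/
def MarkLegal (conn : Bool) (G : SimpleGraph V) (M : Finset V) (v : V) : Prop :=
  v ∉ M ∧ (conn = true → (M = ∅ ∨ ∃ u ∈ M, G.Adj u v))

/-- The marking-game objective for parameter `k`: every unmarked vertex has at most
`k - 1` marked neighbors. -/
def MarkGood (G : SimpleGraph V) (k : ℕ) (M : Finset V) : Prop :=
  ∀ v ∉ M, (M.filter fun u => G.Adj u v).card < k

/-- Alice has a strategy in the (connected, if `conn`) marking game, from position `M`
with `n` moves remaining, guaranteeing that at every moment every unmarked vertex has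
at most `k - 1` marked neighbors. -/
def AliceWinsMarkingFrom [DecidableEq V] (conn : Bool) (G : SimpleGraph V) (k : ℕ) :
    ℕ → Bool → Finset V → Prop
  | 0, _, M => MarkGood G k M
  | n + 1, aliceTurn, M =>
    MarkGood G k M ∧
      (if aliceTurn then
        ∃ v, MarkLegal conn G M v ∧ AliceWinsMarkingFrom conn G k n false (insert v M)
      else
        ∀ v, MarkLegal conn G M v → AliceWinsMarkingFrom conn G k n true (insert v M))

/-- Alice achieves the marking-game bound `k` on `G` (connected version if `conn`). -/
def AliceWinsMarkingGame [Fintype V] [DecidableEq V] (conn : Bool) (G : SimpleGraph V)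
    (k : ℕ) : Prop :=
  AliceWinsMarkingFrom conn G k (Fintype.card V) true ∅

/-- The game coloring number: the least `k` for which Alice has a strategy in the
marking game guaranteeing that every unmarked vertex always has at most `k - 1`
marked neighbors. -/
noncomputable def gameColoringNumber [Fintype V] [DecidableEq V] (G : SimpleGraph V) : ℕ :=
  sInf {k | AliceWinsMarkingGame false G k}

/-- The connected game coloring number. -/
noncomputable def connGameColoringNumber [Fintype V] [DecidableEq V] (G : SimpleGraph V) : ℕ :=
  sInf {k | AliceWinsMarkingGame true G k}

/-- `H` is a minor of `G`: there is a family of nonempty, pairwise disjoint,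
connected branch sets in `G` indexed by the vertices of `H`, with an edge of `G`
between the branch sets of any two adjacent vertices of `H`. -/
def IsMinorOf {W : Type*} (H : SimpleGraph W) (G : SimpleGraph V) : Prop :=
  ∃ f : W → Set V,
    (∀ w, (f w).Nonempty) ∧
    (∀ w, ((G.induce (f w)).Connected)) ∧
    (∀ w w', w ≠ w' → Disjoint (f w) (f w')) ∧
    (∀ w w', H.Adj w w' → ∃ u ∈ f w, ∃ v ∈ f w', G.Adj u v)

/-- A graph is outerplanar iff it contains neither `K₄` nor `K_{2,3}` as a minor. -/
def Outerplanar (G : SimpleGraph V) : Prop :=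
  ¬ IsMinorOf (SimpleGraph.completeGraph (Fin 4)) G ∧
  ¬ IsMinorOf (completeBipartiteGraph (Fin 2) (Fin 3)) G

/-- If `v` has fewer than `k` colored neighbors, some color is available at `v`. -/
lemma color_exists {k : ℕ} (G : SimpleGraph V) (c : V → Option (Fin k)) (M : Finset V)
    [DecidableEq V]
    (hM : ∀ u, (c u).isSome ↔ u ∈ M) (v : V)
    (hv : (M.filter fun u => G.Adj u v).card < k) :
    ∃ a : Fin k, ∀ u, G.Adj v u → c u ≠ some a := by
  by_contra h
  push_neg at h
  choose f hf1 hf2 using h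
  have hmem : ∀ a : Fin k, f a ∈ M.filter fun u => G.Adj u v := by
    intro a
    refine Finset.mem_filter.2 ⟨(hM (f a)).1 ?_, (hf1 a).symm⟩
    rw [hf2 a]; rfl
  have hinj : Set.InjOn f (Finset.univ : Finset (Fin k)) := by
    intro a _ b _ hab
    have : some a = some b := by rw [← hf2 a, hab, hf2 b]
    exact Option.some_injective _ this
  have := Finset.card_le_card_of_injOn f (fun a _ => hmem a) hinj
  simp only [Finset.card_univ, Fintype.card_fin] at this
  omega

/-- Main transfer lemma: Alice's marking strategy yields a coloring strategy. -/
lemma transfer [Fintype V] [DecidableEq V] (G : SimpleGraph V) (k : ℕ) :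
    ∀ (n : ℕ) (turn : Bool) (M : Finset V) (c : V → Option (Fin k)),
      (∀ u, (c u).isSome ↔ u ∈ M) → M.card + n = Fintype.card V →
      AliceWinsMarkingFrom false G k n turn M → AliceWinsFrom false G k n turn c := by
  intro n
  induction n with
  | zero =>
    intro turn M c hM hcard _
    intro v
    have : M = Finset.univ := Finset.eq_univ_of_card M (by simpa using hcard)
    exact (hM v).2 (this ▸ Finset.mem_univ v)
  | succ n ih =>
    intro turn M c hM hcard hmark
    rw [AliceWinsMarkingFrom] at hmark
    rw [AliceWinsFrom]
    obtain ⟨hgood, hrest⟩ := hmark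
    by_cases hall : ∀ v, (c v).isSome
    · exact Or.inl hall
    right
    push_neg at hall
    cases turn with
    | true =>
      simp only [if_true] at hrest ⊢
      obtain ⟨v, hleg, hrec⟩ := hrest
      have hvM : v ∉ M := hleg.1
      obtain ⟨a, ha⟩ := color_exists G c M hM v (hgood v hvM)
      have hcv : c v = none := by
        cases hcv : c v with
        | none => rfl
        | some b => exact absurd ((hM v).1 (by rw [hcv]; rfl)) hvM
      refine ⟨v, a, ⟨⟨hcv, ha⟩, by simp⟩, ?_⟩
      refine ih false (insert v M) (play c v a) ?_ ?_ hrec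
      · intro u
        by_cases hu : u = v
        · subst hu; simp [play, Function.update_self]
        · simp [play, Function.update_of_ne hu, hM u, hu]
      · rw [Finset.card_insert_of_notMem hvM]; omega
    | false =>
      simp only [if_neg (Bool.false_ne_true), Bool.false_eq_true, if_false] at hrest ⊢
      constructor
      · obtain ⟨v, hv⟩ := hall
        have hvM : v ∉ M := fun h => hv ((hM v).2 h)
        have hcv : c v = none := Option.not_isSome_iff_eq_none.1 (by simpa using hv)
        obtain ⟨a, ha⟩ := color_exists G c M hM v (hgood v hvM)
        exact ⟨v, a, ⟨hcv, ha⟩, by simp⟩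
      · intro v a hleg
        have hvM : v ∉ M := fun h => by
          have := (hM v).2 h; rw [hleg.1.1] at this; simp at this
        have hml : MarkLegal false G M v := ⟨hvM, by simp⟩
        refine ih true (insert v M) (play c v a) ?_ ?_ (hrest v hml)
        · intro u
          by_cases hu : u = v
          · subst hu; simp [play, Function.update_self]
          · simp [play, Function.update_of_ne hu, hM u, hu]
        · rw [Finset.card_insert_of_notMem hvM]; omega

/-- Alice trivially wins the marking game with `|V| + 1` colors. -/
lemma trivial_marking [Fintype V] [DecidableEq V] (G : SimpleGraph V) :
    ∀ (n : ℕ) (turn : Bool) (M : Finset V), M.card + n = Fintype.card V →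
      AliceWinsMarkingFrom false G (Fintype.card V + 1) n turn M := by
  intro n
  induction n with
  | zero =>
    intro turn M hcard v _
    calc (M.filter fun u => G.Adj u v).card ≤ M.card := Finset.card_filter_le _ _
      _ < Fintype.card V + 1 := by have := M.card_le_univ; omega
  | succ n ih =>
    intro turn M hcard
    rw [AliceWinsMarkingFrom]
    have hgood : MarkGood G (Fintype.card V + 1) M := by
      intro v _
      calc (M.filter fun u => G.Adj u v).card ≤ M.card := Finset.card_filter_le _ _
        _ < Fintype.card V + 1 := by have := M.card_le_univ; omega
    refine ⟨hgood, ?_⟩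
    cases turn with
    | true =>
      simp only [if_true]
      have hne : M ≠ Finset.univ := by
        intro h; rw [h, Finset.card_univ] at hcard; omega
      obtain ⟨v, hv⟩ : ∃ v, v ∉ M := by
        by_contra h; push_neg at h; exact hne (Finset.eq_univ_of_forall h)
      refine ⟨v, ⟨hv, by simp⟩, ih false (insert v M) ?_⟩
      rw [Finset.card_insert_of_notMem hv]; omega
    | false =>
      simp only [Bool.false_eq_true, if_false]
      intro v hleg
      refine ih true (insert v M) ?_
      rw [Finset.card_insert_of_notMem hleg.1]; omega

end ConnGame

/-- For every finite simple graph `G`, `χ_g(G) ≤ col_g(G)`. -/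
theorem gameChromaticNumber_le_gameColoringNumber {V : Type*} [Fintype V] [DecidableEq V]
    (G : SimpleGraph V) :
    ConnGame.gameChromaticNumber G ≤ ConnGame.gameColoringNumber G := by
  have hne : {k | ConnGame.AliceWinsMarkingGame false G k}.Nonempty :=
    ⟨Fintype.card V + 1,
      ConnGame.trivial_marking G (Fintype.card V) true ∅ (by simp)⟩
  have hmem := Nat.sInf_mem hne
  apply Nat.sInf_le
  exact ConnGame.transfer G _ (Fintype.card V) true ∅ (fun _ => none)
    (by simp) (by simp) hmem
end

section
/- For every finite connected bipartite simple graph G with at least one vertex, Alice has a winning strategy in the connected graph coloring game on G with 2 colors; consequently χ_cg(G) ≤ 2. -/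
open scoped Classical

-- aux lemmas
section Aux
variable {V : Type*}

lemma fin2_eq (a b c : Fin 2) (h1 : a ≠ c) (h2 : b ≠ c) : a = b := by
  revert a b c; decide

lemma cross_edge {G : SimpleGraph V} {c : V → Option (Fin 2)} {u v : V}
    (hu : (c u).isSome) (hv : c v = none) (w : G.Walk u v) :
    ∃ x y, (c x).isSome ∧ c y = none ∧ G.Adj x y := by
  induction w with
  | nil => rw [hv] at hu; simp at hu
  | cons h p ih =>
    rename_i a b d
    cases hb : c b with
    | none => exact ⟨a, b, hu, hb, h⟩
    | some x => exact ih (by simp [hb]) hv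

lemma main_ind {G : SimpleGraph V} [Fintype V] [DecidableEq V]
    (hG : G.Connected) (C : G.Coloring (Fin 2)) :
    ∀ n (b : Bool) (c : V → Option (Fin 2)),
      (∀ v, c v = none ∨ c v = some (C v)) →
      (∃ u, (c u).isSome) →
      (Finset.univ.filter fun v => c v = none).card ≤ n →
      ConnGame.AliceWinsFrom true G 2 n b c := by
  intro n
  induction n with
  | zero =>
    intro b c hinv hne hcard
    intro v
    by_contra h
    have hv : c v = none := by cases hc : c v <;> simp [hc] at h ⊢
    have : v ∈ Finset.univ.filter fun v => c v = none := by simp [hv]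
    have := Finset.card_pos.mpr ⟨v, this⟩
    omega
  | succ n ih =>
    intro b c hinv hne hcard
    show ConnGame.AliceWinsFrom true G 2 (n+1) b c
    rw [ConnGame.AliceWinsFrom]
    by_cases hall : ∀ v, (c v).isSome
    · exact Or.inl hall
    right
    push_neg at hall
    obtain ⟨v0, hv0⟩ := hall
    have hv0n : c v0 = none := by cases hc : c v0 <;> simp [hc] at hv0 ⊢
    obtain ⟨u0, hu0⟩ := hne
    obtain ⟨x, y, hx, hy, hxy⟩ := cross_edge hu0 hv0n (hG.preconnected u0 v0).some
    -- the move (y, C y) is legal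
    have hxv : c x = some (C x) := by
      rcases hinv x with h | h
      · rw [h] at hx; simp at hx
      · exact h
    have hlegal : ConnGame.LegalMove true G c y (C y) := by
      refine ⟨⟨hy, ?_⟩, fun _ => Or.inr ⟨x, hxy.symm, hx⟩⟩
      intro u hu hcu
      rcases hinv u with h | h
      · rw [h] at hcu; simp at hcu
      · rw [h] at hcu
        exact C.valid hu (by injection hcu with h'; exact h'.symm)
    -- preservation lemma for any legal move
    have preserve : ∀ v a, ConnGame.LegalMove true G c v a →
        (∀ w, ConnGame.play c v a w = none ∨ ConnGame.play c v a w = some (C w)) ∧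
        (∃ u, (ConnGame.play c v a u).isSome) ∧
        (Finset.univ.filter fun w => ConnGame.play c v a w = none).card ≤ n := by
      intro v a ⟨⟨hvn, hprop⟩, hconn⟩
      have hconn' : ∃ u, G.Adj v u ∧ (c u).isSome := by
        rcases hconn rfl with h | h
        · rw [h u0] at hu0; simp at hu0
        · exact h
      obtain ⟨u, huv, hus⟩ := hconn'
      have hu : c u = some (C u) := by
        rcases hinv u with h | h
        · rw [h] at hus; simp at hus
        · exact h
      have haC : a = C v := by
        refine fin2_eq a (C v) (C u) ?_ (C.valid huv)
        intro h; exact hprop u huv (h ▸ hu)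
      constructor
      · intro w
        by_cases hw : w = v
        · subst hw; right; simp [ConnGame.play, haC]
        · simpa [ConnGame.play, Function.update_of_ne hw] using hinv w
      constructor
      · exact ⟨v, by simp [ConnGame.play]⟩
      · have hss : (Finset.univ.filter fun w => ConnGame.play c v a w = none) ⊂
            (Finset.univ.filter fun w => c w = none) := by
          constructor
          · intro w hw
            simp only [Finset.mem_filter, Finset.mem_univ, true_and] at hw ⊢
            by_cases h : w = v
            · subst h; simp [ConnGame.play] at hw
            · simpa [ConnGame.play, Function.update_of_ne h] using hw
          · intro hsub
            have : v ∈ Finset.univ.filter fun w => c w = none := by simp [hvn]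
            have := hsub this
            exact absurd (Finset.mem_filter.mp this).2 (by simp [ConnGame.play])
        have := Finset.card_lt_card hss
        omega
    cases b with
    | true =>
      simp only [if_true]
      refine ⟨y, C y, hlegal, ?_⟩
      obtain ⟨h1, h2, h3⟩ := preserve y (C y) hlegal
      exact ih false _ h1 h2 h3
    | false =>
      simp only [Bool.false_eq_true, if_false]
      refine ⟨⟨y, C y, hlegal⟩, ?_⟩
      intro v a hl
      obtain ⟨h1, h2, h3⟩ := preserve v a hl
      exact ih true _ h1 h2 h3

end Aux

/-- For every finite connected bipartite simple graph `G` with at least one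
vertex, Alice wins the connected coloring game on `G` with 2 colors; consequently
`χ_cg(G) ≤ 2`. -/
theorem aliceWins_two_of_bipartite {V : Type*} [Fintype V] [DecidableEq V] [Nonempty V]
    (G : SimpleGraph V) (hG : G.Connected) (hbip : G.Colorable 2) :
    ConnGame.AliceWinsColoringGame true G 2 ∧ ConnGame.connGameChromaticNumber G ≤ 2 := by
  obtain ⟨C⟩ := hbip
  have hwin : ConnGame.AliceWinsColoringGame true G 2 := by
    rw [ConnGame.AliceWinsColoringGame]
    obtain ⟨m, hm⟩ : ∃ m, Fintype.card V = m + 1 :=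
      ⟨Fintype.card V - 1, by have := Fintype.card_pos (α := V); omega⟩
    rw [hm, ConnGame.AliceWinsFrom]
    right
    simp only [if_true]
    obtain ⟨v0⟩ := ‹Nonempty V›
    have hlegal : ConnGame.LegalMove true G (fun _ => none) v0 (C v0) := by
      exact ⟨⟨rfl, fun u _ h => by simp at h⟩, fun _ => Or.inl fun _ => rfl⟩
    refine ⟨v0, C v0, hlegal, ?_⟩
    apply main_ind hG C
    · intro w
      by_cases h : w = v0
      · subst h; right; simp [ConnGame.play]
      · left; simp [ConnGame.play, Function.update_of_ne h]
    · exact ⟨v0, by simp [ConnGame.play]⟩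
    · have : (Finset.univ.filter fun w => ConnGame.play (fun _ => none) v0 (C v0) w = none)
          ⊆ Finset.univ.erase v0 := by
        intro w hw
        simp only [Finset.mem_filter, Finset.mem_univ, true_and] at hw
        simp only [Finset.mem_erase, Finset.mem_univ, and_true]
        intro h; subst h; simp [ConnGame.play] at hw
      have := Finset.card_le_card this
      rw [Finset.card_erase_of_mem (Finset.mem_univ _), Finset.card_univ, hm] at this
      omega
  exact ⟨hwin, Nat.sInf_le hwin⟩
end

section
/- For every integer k ≥ 3, there exists a finite connected bipartite simple graph G_k such that Bob has a winning strategy in the connected graph coloring game on G_k with k colors. -/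
open scoped Classical

namespace BobSol
open ConnGame


abbrev mm (k : ℕ) : ℕ := 2*k+20

abbrev Vx (k : ℕ) : Type :=
  (Fin (mm k) ⊕ Fin (mm k)) ⊕ (Unit ⊕ (Finset (Fin (mm k)) × Fin (mm k) × Fin (mm k)))

variable (k : ℕ)

def pool (j : Fin (mm k)) : Vx k := Sum.inl (Sum.inl j)
def rp (l : Fin (mm k)) : Vx k := Sum.inl (Sum.inr l)
def hub : Vx k := Sum.inr (Sum.inl ())
def uu (T : Finset (Fin (mm k))) (l i : Fin (mm k)) : Vx k := Sum.inr (Sum.inr (T, l, i))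

def adj : Vx k → Vx k → Prop
  | Sum.inl (Sum.inl _), Sum.inr (Sum.inl _) => True
  | Sum.inl (Sum.inl j), Sum.inr (Sum.inr w) => j ∈ w.1
  | Sum.inl (Sum.inr _), Sum.inr (Sum.inl _) => True
  | Sum.inl (Sum.inr l), Sum.inr (Sum.inr w) => w.2.1 = l
  | Sum.inr (Sum.inl _), Sum.inl (Sum.inl _) => True
  | Sum.inr (Sum.inr w), Sum.inl (Sum.inl j) => j ∈ w.1
  | Sum.inr (Sum.inl _), Sum.inl (Sum.inr _) => True
  | Sum.inr (Sum.inr w), Sum.inl (Sum.inr l) => w.2.1 = l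
  | _, _ => False

def G : SimpleGraph (Vx k) where
  Adj := adj k
  symm := by
    constructor; rintro ((j|l)|(u|⟨T,l,i⟩)) ((j'|l')|(u'|⟨T',l',i'⟩)) h <;>
      first | exact h.elim | exact h
  loopless := by
    constructor; rintro ((j|l)|(u|⟨T,l,i⟩)) h <;> exact h.elim

lemma G_connected : (G k).Connected := by
  have hhub : ∀ v : Vx k, (G k).Reachable v (hub k) := by
    rintro ((j|l)|(u|⟨T,l,i⟩))
    · exact SimpleGraph.Adj.reachable (show (G k).Adj (pool k j) (hub k) from trivial)
    · exact SimpleGraph.Adj.reachable (show (G k).Adj (rp k l) (hub k) from trivial)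
    · exact SimpleGraph.Reachable.refl _
    · have h1 : (G k).Adj (uu k T l i) (rp k l) := rfl
      have h2 : (G k).Adj (rp k l) (hub k) := trivial
      exact h1.reachable.trans h2.reachable
  have : Nonempty (Vx k) := ⟨hub k⟩
  exact ⟨fun u v => (hhub u).trans (hhub v).symm⟩

lemma G_colorable : (G k).Colorable 2 := by
  refine ⟨⟨Sum.elim (fun _ => 0) (fun _ => 1), ?_⟩⟩
  rintro ((j|l)|(u|⟨T,l,i⟩)) ((j'|l')|(u'|⟨T',l',i'⟩)) h <;>
    first | exact h.elim | simp


-- ===== game-side basics =====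
variable {k}

abbrev Pos (k : ℕ) := Vx k → Option (Fin k)

noncomputable def numC (c : Pos k) : ℕ :=
  (Finset.univ.filter fun v => (c v).isSome).card

lemma play_eq (c : Pos k) (v : Vx k) (a : Fin k) (w : Vx k) :
    play c v a w = if w = v then some a else c w := Function.update_apply c v (some a) w

lemma play_self (c : Pos k) (v : Vx k) (a : Fin k) : play c v a v = some a := by
  simp [play_eq]

lemma play_some {c : Pos k} {v : Vx k} {a : Fin k} (hv : c v = none) {w : Vx k} {x : Fin k}
    (h : c w = some x) : play c v a w = some x := by
  rw [play_eq, if_neg, h]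
  rintro rfl; rw [hv] at h; exact absurd h (by simp)

lemma play_none {c : Pos k} {v : Vx k} {a : Fin k} {w : Vx k}
    (h : play c v a w = none) : c w = none := by
  rw [play_eq] at h
  by_cases hw : w = v
  · rw [if_pos hw] at h; exact absurd h (by simp)
  · rwa [if_neg hw] at h

lemma numC_play {c : Pos k} {v : Vx k} (hv : c v = none) (a : Fin k) :
    numC (play c v a) = numC c + 1 := by
  unfold numC
  have hset : (Finset.univ.filter fun w => ((play c v a) w).isSome)
      = insert v (Finset.univ.filter fun w => (c w).isSome) := by
    ext w
    simp only [Finset.mem_filter, Finset.mem_univ, true_and, Finset.mem_insert]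
    rw [play_eq]
    by_cases hw : w = v
    · simp [hw]
    · simp [hw]
  rw [hset, Finset.card_insert_of_notMem (by simp [hv])]

lemma exists_uncolored_in (c : Pos k) (f : Fin (mm k) → Vx k)
    (hf : Function.Injective f) (h : numC c < mm k) : ∃ x, c (f x) = none := by
  by_contra hc
  push_neg at hc
  have hsub : Finset.univ.image f ⊆ Finset.univ.filter fun v => (c v).isSome := by
    intro v hv
    simp only [Finset.mem_image, Finset.mem_univ, true_and] at hv
    obtain ⟨x, rfl⟩ := hv
    simp only [Finset.mem_filter, Finset.mem_univ, true_and]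
    exact Option.ne_none_iff_isSome.mp (hc x)
  have := Finset.card_le_card hsub
  rw [Finset.card_image_of_injective _ hf] at this
  simp only [Finset.card_univ, Fintype.card_fin] at this
  exact absurd (lt_of_lt_of_le h this) (lt_irrefl _)

lemma pool_inj : Function.Injective (pool k) := by
  intro a b h; simpa [pool] using h

lemma uu_inj (T : Finset (Fin (mm k))) (l : Fin (mm k)) :
    Function.Injective (fun i => uu k T l i) := by
  intro a b h; simpa [uu] using h

lemma exists_uncolored_pool (c : Pos k) (h : numC c < mm k) : ∃ j, c (pool k j) = none :=
  exists_uncolored_in c (pool k) pool_inj h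

-- ===== blocked vertices and persistence =====

def blocked (c : Pos k) (v : Vx k) : Prop :=
  c v = none ∧ ∀ a : Fin k, ∃ w, (G k).Adj v w ∧ c w = some a

lemma exists_proper_of_not_blocked {c : Pos k} {v : Vx k}
    (hv : c v = none) (hnb : ¬ blocked c v) : ∃ a, ProperMove (G k) c v a := by
  unfold blocked at hnb
  push_neg at hnb
  obtain ⟨a, ha⟩ := hnb hv
  exact ⟨a, hv, fun u hu h => ha u hu h⟩

lemma blocked_play {c : Pos k} {v : Vx k} (hb : blocked c v) {v' : Vx k} {a' : Fin k}
    (hp : ProperMove (G k) c v' a') : blocked (play c v' a') v := by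
  have hne : v ≠ v' := by
    rintro rfl
    obtain ⟨w, hadj, hw⟩ := hb.2 a'
    exact hp.2 w hadj hw
  refine ⟨?_, ?_⟩
  · rw [play_eq, if_neg hne]; exact hb.1
  · intro a
    obtain ⟨w, hadj, hw⟩ := hb.2 a
    exact ⟨w, hadj, play_some hp.1 hw⟩

lemma bobWins_of_blocked :
    ∀ (n : ℕ) (b : Bool) (c : Pos k), (∃ v, blocked c v) →
      BobWinsFrom true (G k) k n b c := by
  intro n
  induction n with
  | zero => rintro b c ⟨v, hv⟩; exact ⟨v, hv.1⟩
  | succ n ih =>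
    rintro b c ⟨v, hv⟩
    cases b with
    | true =>
      refine ⟨⟨v, hv.1⟩, ?_⟩
      intro v' a' hleg
      exact ih false _ ⟨v, blocked_play hv hleg.1⟩
    | false =>
      refine ⟨⟨v, hv.1⟩, ?_⟩
      by_cases hex : ∃ v' a', LegalMove true (G k) c v' a'
      · obtain ⟨v', a', hleg⟩ := hex
        exact Or.inr ⟨v', a', hleg, ih true _ ⟨v, blocked_play hv hleg.1⟩⟩
      · exact Or.inl hex

-- intro helpers for BobWinsFrom
lemma bwf_zero {b : Bool} {c : Pos k} (h : ∃ v, c v = none) :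
    BobWinsFrom true (G k) k 0 b c := h

lemma bwf_alice {n : ℕ} {c : Pos k} (h1 : ∃ v, c v = none)
    (h2 : ∀ v a, LegalMove true (G k) c v a → BobWinsFrom true (G k) k n false (play c v a)) :
    BobWinsFrom true (G k) k (n+1) true c := ⟨h1, h2⟩

lemma bwf_bob {n : ℕ} {c : Pos k} (h1 : ∃ v, c v = none) (v : Vx k) (a : Fin k)
    (hleg : LegalMove true (G k) c v a)
    (h : BobWinsFrom true (G k) k n true (play c v a)) :
    BobWinsFrom true (G k) k (n+1) false c := ⟨h1, Or.inr ⟨v, a, hleg, h⟩⟩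

-- ===== paint phase =====

def painted (c : Pos k) (col : Fin k) : Prop :=
  ∃ T l i, c (uu k T l i) = some col ∧ ∀ j, c (pool k j) = none → j ∈ T

noncomputable def Mset (c : Pos k) : Finset (Fin k) :=
  Finset.univ.filter fun col => ¬ painted c col

def pairGood (c : Pos k) : Prop :=
  ∃ l1 l2 g1 g2, c (rp k l1) = some g1 ∧ c (rp k l2) = some g2 ∧ g1 ≠ g2

/-- paint-phase invariant; `s = 0` at Alice's turn, `s = 1` at Bob's turn. -/
def InvP (c : Pos k) (s : ℕ) : Prop :=
  pairGood c ∧ numC c + 2 * (Mset c).card ≤ 2*k + 6 + s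

lemma painted_mono {c : Pos k} {v : Vx k} {a : Fin k} (hv : c v = none) {col : Fin k}
    (h : painted c col) : painted (play c v a) col := by
  obtain ⟨T, l, i, hc, hT⟩ := h
  exact ⟨T, l, i, play_some hv hc, fun j hj => hT j (play_none hj)⟩

lemma pairGood_mono {c : Pos k} {v : Vx k} {a : Fin k} (hv : c v = none)
    (h : pairGood c) : pairGood (play c v a) := by
  obtain ⟨l1, l2, g1, g2, h1, h2, hne⟩ := h
  exact ⟨l1, l2, g1, g2, play_some hv h1, play_some hv h2, hne⟩

lemma Mset_play_subset {c : Pos k} {v : Vx k} {a : Fin k} (hv : c v = none) :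
    Mset (play c v a) ⊆ Mset c := by
  intro col hcol
  simp only [Mset, Finset.mem_filter, Finset.mem_univ, true_and] at hcol ⊢
  exact fun hp => hcol (painted_mono hv hp)

lemma paintWins (hk : 3 ≤ k) :
    ∀ (n : ℕ), (∀ c : Pos k, InvP c 0 → BobWinsFrom true (G k) k n true c) ∧
      (∀ c : Pos k, InvP c 1 → BobWinsFrom true (G k) k n false c) := by
  intro n
  induction n with
  | zero =>
    constructor <;>
    · intro c hinv
      refine bwf_zero ?_
      obtain ⟨j, hj⟩ := exists_uncolored_pool c (by have := hinv.2; simp only [mm]; omega)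
      exact ⟨pool k j, hj⟩
  | succ n ih =>
    constructor
    · -- Alice's turn
      intro c hinv
      obtain ⟨hpg, hbud⟩ := hinv
      have hexu : ∃ v, c v = none := by
        obtain ⟨j, hj⟩ := exists_uncolored_pool c (by simp only [mm]; omega)
        exact ⟨pool k j, hj⟩
      refine bwf_alice hexu ?_
      intro v a hleg
      have hv : c v = none := hleg.1.1
      refine ih.2 _ ⟨pairGood_mono hv hpg, ?_⟩
      have hsub := Finset.card_le_card (Mset_play_subset hv (a := a))
      rw [numC_play hv]
      omega
    · -- Bob's turn
      intro c hinv
      obtain ⟨hpg, hbud⟩ := hinv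
      have hexu : ∃ v, c v = none := by
        obtain ⟨j, hj⟩ := exists_uncolored_pool c (by simp only [mm]; omega)
        exact ⟨pool k j, hj⟩
      by_cases hM : Mset c = ∅
      · -- all colors painted: a blocked pool vertex exists
        obtain ⟨j, hj⟩ := exists_uncolored_pool c (by simp only [mm]; omega)
        refine bobWins_of_blocked _ _ _ ⟨pool k j, hj, ?_⟩
        intro a
        have hp : painted c a := by
          by_contra hnp
          have : a ∈ Mset c := by
            simp only [Mset, Finset.mem_filter, Finset.mem_univ, true_and]; exact hnp
          rw [hM] at this; exact absurd this (Finset.notMem_empty a)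
        obtain ⟨T, l, i, hc, hT⟩ := hp
        exact ⟨uu k T l i, hT j hj, hc⟩
      · -- paint a missing color
        obtain ⟨col, hcolM⟩ := Finset.nonempty_iff_ne_empty.mpr hM
        obtain ⟨l1, l2, g1, g2, h1, h2, hne⟩ := id hpg
        obtain ⟨lst, gst, hlst, hgst⟩ : ∃ l g, c (rp k l) = some g ∧ g ≠ col := by
          by_cases hg : g1 = col
          · exact ⟨l2, g2, h2, fun h => hne (h ▸ hg ▸ rfl)⟩
          · exact ⟨l1, g1, h1, hg⟩
        set T : Finset (Fin (mm k)) := Finset.univ.filter (fun j => c (pool k j) = none)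
          with hT
        obtain ⟨i, hi⟩ := exists_uncolored_in c (fun i => uu k T lst i) (uu_inj T lst)
          (by simp only [mm]; omega)
        have hprop : ProperMove (G k) c (uu k T lst i) col := by
          refine ⟨hi, ?_⟩
        -- check all neighbors of the painted vertex
          rintro ((j|l')|(un|⟨T',l',i'⟩)) hu
          · have hjT : j ∈ T := hu
            have hjn : c (pool k j) = none := by
              simpa only [hT, Finset.mem_filter, Finset.mem_univ, true_and] using hjT
            show c (pool k j) ≠ some col
            rw [hjn]; exact fun h => absurd h (by simp)
          · have hl : lst = l' := hu
            show c (rp k l') ≠ some col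
            rw [← hl, hlst]
            intro h
            exact hgst (Option.some_injective _ h)
          · exact hu.elim
          · exact hu.elim
        have hconn : ConnMove (G k) c (uu k T lst i) := by
          refine Or.inr ⟨rp k lst, rfl, ?_⟩
          rw [hlst]; rfl
        refine bwf_bob hexu _ _ ⟨hprop, fun _ => hconn⟩ ?_
        refine ih.1 _ ⟨pairGood_mono hi hpg, ?_⟩
        have hpaintednew : painted (play c (uu k T lst i) col) col := by
          refine ⟨T, lst, i, play_self c _ col, ?_⟩
          intro j hj
          have hjn : c (pool k j) = none := play_none hj
          simp only [hT, Finset.mem_filter, Finset.mem_univ, true_and]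
          exact hjn
        have hsub : Mset (play c (uu k T lst i) col) ⊆ (Mset c).erase col := by
          intro x hx
          have hx' := Mset_play_subset hi (a := col) hx
          refine Finset.mem_erase.mpr ⟨?_, hx'⟩
          rintro rfl
          simp only [Mset, Finset.mem_filter, Finset.mem_univ, true_and] at hx
          exact hx hpaintednew
        have hcard : (Mset (play c (uu k T lst i) col)).card ≤ (Mset c).card - 1 := by
          have := Finset.card_le_card hsub
          rwa [Finset.card_erase_of_mem hcolM] at this
        have hcpos : 1 ≤ (Mset c).card := Finset.card_pos.mpr ⟨col, hcolM⟩
        rw [numC_play hi]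
        omega

-- ===== opening phase =====

def famOf : Vx k → Option (Fin (mm k))
  | Sum.inl (Sum.inr l) => some l
  | Sum.inr (Sum.inr w) => some w.2.1
  | _ => none

def untouched (c : Pos k) (l : Fin (mm k)) : Prop :=
  ∀ v, famOf v = some l → c v = none

lemma exists_untouched (c : Pos k) (h : numC c < mm k) : ∃ l, untouched c l := by
  by_contra hc
  push_neg at hc
  have hc' : ∀ l, ∃ v, famOf v = some l ∧ c v ≠ none := by
    intro l
    have h := hc l
    unfold untouched at h
    push_neg at h
    exact h
  choose w hw1 hw2 using hc'
  have hinj : Function.Injective w := by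
    intro a b hab
    have ha : (some a : Option (Fin (mm k))) = some b := by
      rw [← hw1 a, hab, hw1 b]
    exact Option.some_injective _ ha
  obtain ⟨x, hx⟩ := exists_uncolored_in c w hinj h
  exact hw2 x hx

lemma rp_inj : Function.Injective (rp k) := by
  intro a b h; simpa [rp] using h

lemma exists_third (hk : 3 ≤ k) (a b : Fin k) : ∃ d : Fin k, d ≠ a ∧ d ≠ b := by
  have hcard : ({a, b} : Finset (Fin k)).card ≤ 2 :=
    (Finset.card_insert_le _ _).trans (by simp)
  have hpos : 0 < (({a, b} : Finset (Fin k))ᶜ).card := by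
    rw [Finset.card_compl]
    simp only [Fintype.card_fin]
    omega
  obtain ⟨d, hd⟩ := Finset.card_pos.mp hpos
  rw [Finset.mem_compl, Finset.mem_insert, Finset.mem_singleton] at hd
  push_neg at hd
  exact ⟨d, hd.1, hd.2⟩

def hasRP (c : Pos k) : Prop := ∃ l, (c (rp k l)).isSome

noncomputable def flagv (P : Prop) : ℕ := if P then 0 else 1

lemma flagv_le {P Q : Prop} (h : P → Q) : flagv Q ≤ flagv P := by
  unfold flagv
  by_cases hP : P
  · simp [hP, h hP]
  · by_cases hQ : Q <;> simp [hP, hQ]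

lemma flagv_le_one (P : Prop) : flagv P ≤ 1 := by
  unfold flagv; split <;> omega

lemma flagv_true {P : Prop} (h : P) : flagv P = 0 := if_pos h

lemma flagv_false {P : Prop} (h : ¬ P) : flagv P = 1 := if_neg h

noncomputable def rho (c : Pos k) : ℕ :=
  if pairGood c then 0
  else 1 + flagv (hasRP c) + flagv ((c (hub k)).isSome)

lemma rho_le_three (c : Pos k) : rho c ≤ 3 := by
  unfold rho
  have h1 := flagv_le_one (hasRP c)
  have h2 := flagv_le_one ((c (hub k)).isSome)
  split <;> omega

lemma rho_pos {c : Pos k} (h : ¬ pairGood c) : 1 ≤ rho c := by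
  unfold rho
  rw [if_neg h]
  omega

lemma hasRP_mono {c : Pos k} {v : Vx k} {a : Fin k} (hv : c v = none)
    (h : hasRP c) : hasRP (play c v a) := by
  obtain ⟨l, hl⟩ := h
  obtain ⟨g, hg⟩ := Option.isSome_iff_exists.mp hl
  exact ⟨l, by rw [play_some hv hg]; rfl⟩

lemma hub_mono {c : Pos k} {v : Vx k} {a : Fin k} (hv : c v = none)
    (h : (c (hub k)).isSome) : ((play c v a) (hub k)).isSome := by
  obtain ⟨g, hg⟩ := Option.isSome_iff_exists.mp h
  rw [play_some hv hg]; rfl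

lemma rho_play_le {c : Pos k} {v : Vx k} {a : Fin k} (hv : c v = none) :
    rho (play c v a) ≤ rho c := by
  unfold rho
  by_cases hpg : pairGood c
  · rw [if_pos hpg, if_pos (pairGood_mono hv hpg)]
  · rw [if_neg hpg]
    by_cases hpg2 : pairGood (play c v a)
    · rw [if_pos hpg2]; omega
    · rw [if_neg hpg2]
      have h1 := flagv_le (hasRP_mono hv (a := a))
      have h2 := flagv_le (hub_mono hv (a := a))
      omega

def Inv01 (c : Pos k) (s : ℕ) : Prop :=
  ¬ pairGood c ∧ numC c + 2 * rho c ≤ 6 + s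

lemma Mset_card_le (c : Pos k) : (Mset c).card ≤ k :=
  (Finset.card_le_univ _).trans (by simp)

/-- If all `rp`s except possibly `l0` are uncolored in `c`, then coloring `rp l0`
cannot create a distinct-colored pair. -/
lemma not_pairGood_single {c : Pos k} {l0 : Fin (mm k)} {a : Fin k}
    (hall : ∀ l, c (rp k l) = none) :
    ¬ pairGood (play c (rp k l0) a) := by
  rintro ⟨l1, l2, g1, g2, h1, h2, hne⟩
  have e1 : l1 = l0 := by
    by_contra h
    rw [play_eq, if_neg (fun hh => h (rp_inj hh)), hall l1] at h1
    exact absurd h1 (by simp)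
  have e2 : l2 = l0 := by
    by_contra h
    rw [play_eq, if_neg (fun hh => h (rp_inj hh)), hall l2] at h2
    exact absurd h2 (by simp)
  rw [e1, play_self] at h1
  rw [e2, play_self] at h2
  have hg1 : a = g1 := Option.some_injective _ h1
  have hg2 : a = g2 := Option.some_injective _ h2
  rw [← hg1, ← hg2] at hne
  exact hne rfl

lemma stage01 (hk : 3 ≤ k) :
    ∀ (n : ℕ), (∀ c : Pos k, Inv01 c 0 → BobWinsFrom true (G k) k n true c) ∧
      (∀ c : Pos k, Inv01 c 1 → BobWinsFrom true (G k) k n false c) := by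
  intro n
  induction n with
  | zero =>
    constructor <;>
    · intro c hinv
      refine bwf_zero ?_
      obtain ⟨j, hj⟩ := exists_uncolored_pool c (by have := hinv.2; simp only [mm]; omega)
      exact ⟨pool k j, hj⟩
  | succ n ih =>
    constructor
    · -- Alice to move
      intro c hinv
      obtain ⟨hpg, hbud⟩ := hinv
      have hrho1 := rho_pos hpg
      have hexu : ∃ v, c v = none := by
        obtain ⟨j, hj⟩ := exists_uncolored_pool c (by simp only [mm]; omega)
        exact ⟨pool k j, hj⟩
      refine bwf_alice hexu ?_
      intro v a hleg
      have hv : c v = none := hleg.1.1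
      by_cases hpg2 : pairGood (play c v a)
      · -- Alice just created a distinct pair: enter paint phase
        refine (paintWins hk n).2 _ ⟨hpg2, ?_⟩
        have hM := Mset_card_le (play c v a)
        rw [numC_play hv]
        omega
      · refine ih.2 _ ⟨hpg2, ?_⟩
        have := rho_play_le hv (a := a)
        rw [numC_play hv]
        omega
    · -- Bob to move
      intro c hinv
      obtain ⟨hpg, hbud⟩ := hinv
      have hrho1 := rho_pos hpg
      have hrho3 := rho_le_three c
      have hexu : ∃ v, c v = none := by
        obtain ⟨j, hj⟩ := exists_uncolored_pool c (by simp only [mm]; omega)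
        exact ⟨pool k j, hj⟩
      by_cases hbl : ∃ v, blocked c v
      · exact bobWins_of_blocked _ _ _ hbl
      have hnb : ∀ v, ¬ blocked c v := not_exists.mp hbl
      by_cases hhub : c (hub k) = none
      · -- hub still uncolored
        have hhubflag : ¬ ((c (hub k)).isSome = true) := by
          rw [hhub]; exact Bool.false_ne_true
        by_cases hP : (∃ j, (c (pool k j)).isSome) ∨ (∃ l, (c (rp k l)).isSome)
        · -- hub is playable: color it
          obtain ⟨a, hprop⟩ := exists_proper_of_not_blocked hhub (hnb _)
          have hconn : ConnMove (G k) c (hub k) := by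
            rcases hP with ⟨j, hj⟩ | ⟨l, hl⟩
            · exact Or.inr ⟨pool k j, trivial, hj⟩
            · exact Or.inr ⟨rp k l, trivial, hl⟩
          have hrpfix : ∀ l, (play c (hub k) a) (rp k l) = c (rp k l) := by
            intro l
            rw [play_eq, if_neg (by simp [rp, hub])]
          have hpg2 : ¬ pairGood (play c (hub k) a) := by
            rintro ⟨l1, l2, g1, g2, h1, h2, hne⟩
            rw [hrpfix] at h1 h2
            exact hpg ⟨l1, l2, g1, g2, h1, h2, hne⟩
          have hrhodrop : rho (play c (hub k) a) + 1 ≤ rho c := by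
            unfold rho
            rw [if_neg hpg, if_neg hpg2, flagv_false hhubflag,
              flagv_true (show ((play c (hub k) a) (hub k)).isSome by rw [play_self]; rfl)]
            have h1 := flagv_le (hasRP_mono hhub (a := a))
            omega
          refine bwf_bob hexu _ _ ⟨hprop, fun _ => hconn⟩ (ih.1 _ ⟨hpg2, ?_⟩)
          rw [numC_play hhub]
          omega
        · push_neg at hP
          obtain ⟨hP1, hP2⟩ := hP
          have hrpnone : ∀ l, c (rp k l) = none := fun l =>
            Option.not_isSome_iff_eq_none.mp (hP2 l)
          by_cases hemp : ∀ v, c v = none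
          · -- empty board: Bob may color the hub anyway
            obtain ⟨a, hprop⟩ := exists_proper_of_not_blocked hhub (hnb _)
            have hrpfix : ∀ l, (play c (hub k) a) (rp k l) = c (rp k l) := by
              intro l
              rw [play_eq, if_neg (by simp [rp, hub])]
            have hpg2 : ¬ pairGood (play c (hub k) a) := by
              rintro ⟨l1, l2, g1, g2, h1, h2, hne⟩
              rw [hrpfix] at h1 h2
              exact hpg ⟨l1, l2, g1, g2, h1, h2, hne⟩
            have hrhodrop : rho (play c (hub k) a) + 1 ≤ rho c := by
              unfold rho
              rw [if_neg hpg, if_neg hpg2, flagv_false hhubflag,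
                flagv_true (show ((play c (hub k) a) (hub k)).isSome by rw [play_self]; rfl)]
              have h1 := flagv_le (hasRP_mono hhub (a := a))
              omega
            refine bwf_bob hexu _ _ ⟨hprop, fun _ => Or.inl hemp⟩ (ih.1 _ ⟨hpg2, ?_⟩)
            rw [numC_play hhub]
            omega
          · -- something is colored, and it must be a `uu`; color its anchor
            push_neg at hemp
            obtain ⟨v0, hv0⟩ := hemp
            rcases v0 with ((j|l)|(un|⟨T0,l0,i0⟩))
            · exact absurd (Option.ne_none_iff_isSome.mp hv0) (hP1 j)
            · exact absurd (Option.ne_none_iff_isSome.mp hv0) (hP2 l)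
            · cases un; exact absurd hhub hv0
            · have huucol : (c (uu k T0 l0 i0)).isSome :=
                Option.ne_none_iff_isSome.mp hv0
              obtain ⟨a, hprop⟩ := exists_proper_of_not_blocked (hrpnone l0) (hnb _)
              have hconn : ConnMove (G k) c (rp k l0) :=
                Or.inr ⟨uu k T0 l0 i0, rfl, huucol⟩
              have hpg2 := not_pairGood_single (l0 := l0) (a := a) hrpnone
              have hnorp : ¬ hasRP c := by
                rintro ⟨l, hl⟩
                rw [hrpnone l] at hl
                exact Bool.noConfusion hl
              have hrc : rho c = 3 := by
                unfold rho
                rw [if_neg hpg, flagv_false hnorp, flagv_false hhubflag]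
              have hrp2 : rho (play c (rp k l0) a) ≤ 2 := by
                unfold rho
                rw [if_neg hpg2,
                  flagv_true (show hasRP (play c (rp k l0) a) from
                    ⟨l0, by rw [play_self]; rfl⟩)]
                have := flagv_le_one (((play c (rp k l0) a) (hub k)).isSome)
                omega
              refine bwf_bob hexu _ _ ⟨hprop, fun _ => hconn⟩ (ih.1 _ ⟨hpg2, ?_⟩)
              rw [numC_play (hrpnone l0)]
              omega
      · -- hub already colored
        obtain ⟨ch, hch⟩ : ∃ x, c (hub k) = some x := by
          cases hcv : c (hub k) with
          | none => exact absurd hcv hhub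
          | some x => exact ⟨x, rfl⟩
        have hhubflag : (c (hub k)).isSome := by rw [hch]; rfl
        by_cases hR : ∃ l g, c (rp k l) = some g
        · -- an rp is colored: create a second, distinctly colored rp
          obtain ⟨l0, g0, hl0⟩ := hR
          have hhasrp : hasRP c := ⟨l0, by rw [hl0]; rfl⟩
          have hrc : rho c = 1 := by
            unfold rho
            rw [if_neg hpg, flagv_true hhasrp, flagv_true hhubflag]
          have hnum5 : numC c ≤ 5 := by omega
          obtain ⟨lst, hlst⟩ := exists_untouched c (by simp only [mm]; omega)
          have hlstnone : c (rp k lst) = none := hlst (rp k lst) rfl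
          obtain ⟨d, hd1, hd2⟩ := exists_third hk ch g0
          have hprop : ProperMove (G k) c (rp k lst) d := by
            refine ⟨hlstnone, ?_⟩
            rintro ((j|l')|(un|⟨T',l',i'⟩)) hu
            · exact hu.elim
            · exact hu.elim
            · show c (hub k) ≠ some d
              rw [hch]
              intro h
              exact hd1 (Option.some_injective _ h).symm
            · have : l' = lst := hu
              subst this
              show c (uu k T' l' i') ≠ some d
              rw [hlst (uu k T' l' i') rfl]
              exact fun h => absurd h (by simp)
          have hconn : ConnMove (G k) c (rp k lst) :=
            Or.inr ⟨hub k, trivial, hhubflag⟩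
          have hpgnew : pairGood (play c (rp k lst) d) :=
            ⟨l0, lst, g0, d, play_some hlstnone hl0, play_self c _ d,
              fun h => hd2 h.symm⟩
          refine bwf_bob hexu _ _ ⟨hprop, fun _ => hconn⟩ ?_
          refine (paintWins hk n).1 _ ⟨hpgnew, ?_⟩
          have hM := Mset_card_le (play c (rp k lst) d)
          rw [numC_play hlstnone]
          omega
        · -- no rp colored yet: color a first one (any legal color)
          have hrpnone : ∀ l, c (rp k l) = none := by
            intro l
            cases hcv : c (rp k l) with
            | none => rfl
            | some g => exact absurd ⟨l, g, hcv⟩ hR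
          have hnorp : ¬ hasRP c := by
            rintro ⟨l, hl⟩
            rw [hrpnone l] at hl
            exact Bool.noConfusion hl
          have hl0 : (0 : ℕ) < mm k := by simp only [mm]; omega
          set l0 : Fin (mm k) := ⟨0, hl0⟩
          obtain ⟨a, hprop⟩ := exists_proper_of_not_blocked (hrpnone l0) (hnb _)
          have hconn : ConnMove (G k) c (rp k l0) :=
            Or.inr ⟨hub k, trivial, hhubflag⟩
          have hpg2 := not_pairGood_single (l0 := l0) (a := a) hrpnone
          have hrc : rho c = 2 := by
            unfold rho
            rw [if_neg hpg, flagv_false hnorp, flagv_true hhubflag]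
          have hrp1 : rho (play c (rp k l0) a) ≤ 1 := by
            unfold rho
            rw [if_neg hpg2,
              flagv_true (show hasRP (play c (rp k l0) a) from ⟨l0, by rw [play_self]; rfl⟩),
              flagv_true (hub_mono (hrpnone l0) hhubflag)]
          refine bwf_bob hexu _ _ ⟨hprop, fun _ => hconn⟩ (ih.1 _ ⟨hpg2, ?_⟩)
          rw [numC_play (hrpnone l0)]
          omega

end BobSol

/-- For every integer `k ≥ 3`, there exists a finite connected bipartite
simple graph on which Bob wins the connected coloring game with `k` colors. -/
theorem exists_bipartite_bobWins (k : ℕ) (hk : 3 ≤ k) :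
    ∃ (V : Type) (iF : Fintype V) (iD : DecidableEq V) (G : SimpleGraph V),
      G.Connected ∧ G.Colorable 2 ∧ @ConnGame.BobWinsColoringGame V iF iD true G k := by
  refine ⟨BobSol.Vx k, inferInstance, inferInstance, BobSol.G k,
    BobSol.G_connected k, BobSol.G_colorable k, ?_⟩
  have h0 : BobSol.Inv01 (k := k) (fun _ => none) 0 := by
    constructor
    · rintro ⟨l1, l2, g1, g2, h1, h2, hne⟩
      exact absurd h1 (by simp)
    · have h1 : BobSol.numC (k := k) (fun _ => none) = 0 := by
        simp [BobSol.numC]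
      have h3 := BobSol.rho_le_three (k := k) (fun _ => none)
      omega
  exact (BobSol.stage01 hk (Fintype.card (BobSol.Vx k))).1 _ h0
end

section
/- Let k ≥ 3 be an integer, let H be a finite bipartite simple graph with partite sets A and B, containing no 4-cycle, with minimum degree at least k², and let G be the connected graph obtained from H by adding, for each k-element subset S of B, one new vertex v_S adjacent exactly to the vertices of S. Then Bob has a winning strategy in the connected graph coloring game on G with k colors. -/
open scoped Classical

set_option linter.unusedSectionVars false

section BobReduction

open ConnGame

variable {W : Type*} [DecidableEq W] {k : ℕ} {G : SimpleGraph W}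

/-- The partial coloring is proper. -/
def PInv (G : SimpleGraph W) (k : ℕ) (c : W → Option (Fin k)) : Prop :=
  ∀ u v a, G.Adj u v → c u = some a → c v ≠ some a

lemma pinv_play {c : W → Option (Fin k)} {v : W} {a : Fin k}
    (hp : ProperMove G c v a) (h : PInv G k c) : PInv G k (play c v a) := by
  intro x y b hxy hx hy
  unfold play at hx hy
  by_cases hxv : x = v
  · rw [hxv] at hxy
    have hyv : y ≠ v := fun h' => G.irrefl (h' ▸ hxy)
    rw [hxv, Function.update_self] at hx
    rw [Function.update_of_ne hyv] at hy
    obtain rfl : a = b := by injection hx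
    exact hp.2 y hxy hy
  · rw [Function.update_of_ne hxv] at hx
    by_cases hyv : y = v
    · rw [hyv] at hxy
      rw [hyv, Function.update_self] at hy
      obtain rfl : a = b := by injection hy
      exact hp.2 x hxy.symm hx
    · rw [Function.update_of_ne hyv] at hy
      exact h x y b hxy hx hy

lemma mono_play {c : W → Option (Fin k)} {v : W} {a : Fin k} {u : W} {i : Fin k}
    (hv : c v = none) (h : c u = some i) : play c v a u = some i := by
  unfold play
  by_cases huv : u = v
  · subst huv; rw [hv] at h; cases h
  · rw [Function.update_of_ne huv]; exact h

end BobReduction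

section BobMain

open ConnGame

variable {V : Type*} [Fintype V] [DecidableEq V] {k : ℕ} {B : Finset V}
variable {G : SimpleGraph (V ⊕ {S : Finset V // S ⊆ B ∧ S.card = k})}

/-- All `k` colors appear on `B`. -/
def RInv (B : Finset V) (k : ℕ)
    (c : (V ⊕ {S : Finset V // S ⊆ B ∧ S.card = k}) → Option (Fin k)) : Prop :=
  ∀ i : Fin k, ∃ b ∈ B, c (Sum.inl b) = some i

lemma rinv_play {c : (V ⊕ {S : Finset V // S ⊆ B ∧ S.card = k}) → Option (Fin k)}
    {v : V ⊕ {S : Finset V // S ⊆ B ∧ S.card = k}} {a : Fin k} (hv : c v = none) (h : RInv B k c) : RInv B k (play c v a) := by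
  intro i
  obtain ⟨b, hb, hcb⟩ := h i
  exact ⟨b, hb, mono_play hv hcb⟩

variable (hadj : ∀ (S : {S : Finset V // S ⊆ B ∧ S.card = k}) (u : V),
    G.Adj (Sum.inr S) (Sum.inl u) ↔ u ∈ S.val)

include hadj in
/-- If the coloring is proper and all `k` colors appear on `B`, some vertex is uncolored:
namely the vertex `v_S` of a rainbow `k`-subset `S` of `B`. -/
lemma rainbow_uncolored {c : (V ⊕ {S : Finset V // S ⊆ B ∧ S.card = k}) → Option (Fin k)}
    (hp : PInv G k c) (hr : RInv B k c) : ∃ v, c v = none := by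
  classical
  -- choose one vertex of `B` of each color
  choose f hfB hfc using hr
  have hinj : Function.Injective f := by
    intro i j hij
    by_contra hne
    have h1 := hfc i
    have h2 := hfc j
    rw [hij] at h1
    rw [h1] at h2
    exact hne (by injection h2)
  set S : Finset V := Finset.image f Finset.univ with hS
  have hSB : S ⊆ B := by
    intro x hx
    simp only [hS, Finset.mem_image] at hx
    obtain ⟨i, _, rfl⟩ := hx
    exact hfB i
  have hScard : S.card = k := by
    rw [hS, Finset.card_image_of_injective _ hinj, Finset.card_univ, Fintype.card_fin]
  refine ⟨Sum.inr ⟨S, hSB, hScard⟩, ?_⟩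
  rcases hv : c (Sum.inr ⟨S, hSB, hScard⟩) with _ | a
  · rfl
  · exfalso
    have hmem : f a ∈ S := by
      simp only [hS, Finset.mem_image]
      exact ⟨a, Finset.mem_univ _, rfl⟩
    have hadj' : G.Adj (Sum.inr ⟨S, hSB, hScard⟩) (Sum.inl (f a)) :=
      (hadj ⟨S, hSB, hScard⟩ (f a)).2 hmem
    exact hp _ _ a hadj' hv (hfc a)

include hadj in
/-- Bob wins from any proper position in which all `k` colors already appear on `B`. -/
lemma bobWinsFrom_of_rainbow :
    ∀ (n : ℕ) (turn : Bool) (c : (V ⊕ {S : Finset V // S ⊆ B ∧ S.card = k}) → Option (Fin k)),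
      PInv G k c → RInv B k c → BobWinsFrom true G k n turn c := by
  intro n
  induction n with
  | zero =>
    intro turn c hp hr
    exact rainbow_uncolored hadj hp hr
  | succ n ih =>
    intro turn c hp hr
    refine ⟨rainbow_uncolored hadj hp hr, ?_⟩
    cases turn with
    | false =>
      simp only [if_neg (by simp : ¬ (false = true))]
      by_cases h : ∃ v a, LegalMove true G c v a
      · obtain ⟨v, a, hleg⟩ := h
        exact Or.inr ⟨v, a, hleg,
          ih true _ (pinv_play hleg.1 hp) (rinv_play hleg.1.1 hr)⟩
      · exact Or.inl h
    | true =>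
      simp only [if_pos rfl]
      intro v a hleg
      exact ih false _ (pinv_play hleg.1 hp) (rinv_play hleg.1.1 hr)

end BobMain


section BobBlocked

open ConnGame

variable {W : Type*} [DecidableEq W] {k : ℕ} {G : SimpleGraph W}

/-- A vertex is blocked: uncolored, but every color appears on its neighborhood. -/
def Blocked (G : SimpleGraph W) (k : ℕ) (c : W → Option (Fin k)) (v : W) : Prop :=
  c v = none ∧ ∀ i : Fin k, ∃ u, G.Adj v u ∧ c u = some i

lemma blocked_play {c : W → Option (Fin k)} {v w : W} {a : Fin k}
    (hm : ProperMove G c w a) (h : Blocked G k c v) : Blocked G k (play c w a) v := by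
  obtain ⟨hv, hcol⟩ := h
  constructor
  · -- v cannot be the played vertex: playing v with color a would be improper
    have hvw : v ≠ w := by
      rintro rfl
      obtain ⟨u, hadj, hu⟩ := hcol a
      exact hm.2 u hadj hu
    unfold play
    rw [Function.update_of_ne hvw]
    exact hv
  · intro i
    obtain ⟨u, hadj, hu⟩ := hcol i
    exact ⟨u, hadj, mono_play hm.1 hu⟩

/-- Bob wins from any position containing a blocked vertex. -/
lemma bobWinsFrom_of_blocked :
    ∀ (n : ℕ) (turn : Bool) (c : W → Option (Fin k)) (v : W),
      Blocked G k c v → BobWinsFrom true G k n turn c := by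
  intro n
  induction n with
  | zero => intro turn c v h; exact ⟨v, h.1⟩
  | succ n ih =>
    intro turn c v h
    refine ⟨⟨v, h.1⟩, ?_⟩
    cases turn with
    | false =>
      simp only [if_neg (by simp : ¬ (false = true))]
      by_cases hleg : ∃ w a, LegalMove true G c w a
      · obtain ⟨w, a, hl⟩ := hleg
        exact Or.inr ⟨w, a, hl, ih true _ v (blocked_play hl.1 h)⟩
      · exact Or.inl hleg
    | true =>
      simp only [if_pos rfl]
      intro w a hl
      exact ih false _ v (blocked_play hl.1 h)

end BobBlocked


section Strategy

open ConnGame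

variable {V : Type*} [Fintype V] [DecidableEq V]
variable {k : ℕ} {H : SimpleGraph V} {A B : Finset V}

variable {G : SimpleGraph (V ⊕ {S : Finset V // S ⊆ B ∧ S.card = k})}

section Basic

variable (hk : 3 ≤ k)
  (hcover : ∀ v, v ∈ A ∨ v ∈ B) (hdisj : Disjoint A B)
  (hbip : ∀ u v, H.Adj u v → (u ∈ A ∧ v ∈ B) ∨ (u ∈ B ∧ v ∈ A))
  (hC4free : ∀ a b c d : V, a ≠ b → a ≠ c → a ≠ d → b ≠ c → b ≠ d → c ≠ d →
      ¬(H.Adj a b ∧ H.Adj b c ∧ H.Adj c d ∧ H.Adj d a))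
  (hmindeg : ∀ v, k ^ 2 ≤ H.degree v)
  (hadj1 : ∀ u v : V, G.Adj (Sum.inl u) (Sum.inl v) ↔ H.Adj u v)
  (hadj2 : ∀ (S : {S : Finset V // S ⊆ B ∧ S.card = k}) (u : V),
      G.Adj (Sum.inr S) (Sum.inl u) ↔ u ∈ S.val)
  (hadj3 : ∀ (S T : {S : Finset V // S ⊆ B ∧ S.card = k}), ¬ G.Adj (Sum.inr S) (Sum.inr T))

include hbip hdisj in
lemma mem_B_of_adj_of_mem_A {u v : V} (hu : u ∈ A) (h : H.Adj u v) : v ∈ B := by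
  rcases hbip u v h with ⟨_, h2⟩ | ⟨h1, _⟩
  · exact h2
  · exact absurd hu (Finset.disjoint_right.1 hdisj h1)

include hbip hdisj in
lemma mem_A_of_adj_of_mem_B {u v : V} (hu : u ∈ B) (h : H.Adj u v) : v ∈ A := by
  rcases hbip u v h with ⟨h1, _⟩ | ⟨_, h2⟩
  · exact absurd hu (Finset.disjoint_left.1 hdisj h1)
  · exact h2

include hmindeg hk in
lemma deg_pos (v : V) : 0 < (H.neighborFinset v).card := by
  have h : k ^ 2 ≤ (H.neighborFinset v).card := hmindeg v
  have hk2 : 0 < k ^ 2 := by positivity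
  omega

include hmindeg in
lemma deg_ge (v : V) : k ^ 2 ≤ (H.neighborFinset v).card := hmindeg v

include hC4free in
/-- C4-freeness: two distinct vertices have at most one common neighbor. -/
lemma common_nbr_le_one {x y : V} (hxy : x ≠ y) :
    (H.neighborFinset x ∩ H.neighborFinset y).card ≤ 1 := by
  by_contra h
  push_neg at h
  obtain ⟨u, hu, w, hw, huw⟩ := Finset.one_lt_card.1 h
  simp only [Finset.mem_inter, SimpleGraph.mem_neighborFinset] at hu hw
  have hxu : x ≠ u := fun h' => H.irrefl (h' ▸ hu.1)
  have hxw : x ≠ w := fun h' => H.irrefl (h' ▸ hw.1)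
  have hyu : y ≠ u := fun h' => H.irrefl (h' ▸ hu.2)
  have hyw : y ≠ w := fun h' => H.irrefl (h' ▸ hw.2)
  exact hC4free x u y w hxu hxy hxw hyu.symm huw hyw
    ⟨hu.1, hu.2.symm, hw.2, hw.1.symm⟩
include hk hbip hdisj hC4free hmindeg in
/-- The side `B` is large: `k²(k²-1) + 1 ≤ |B|`. -/
lemma B_large (hB : B.Nonempty) : k ^ 2 * (k ^ 2 - 1) + 1 ≤ B.card := by
  classical
  obtain ⟨b₀, hb₀⟩ := hB
  set NA := H.neighborFinset b₀ with hNA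
  have hNAA : ∀ a ∈ NA, a ∈ A := by
    intro a ha
    rw [hNA, SimpleGraph.mem_neighborFinset] at ha
    exact mem_A_of_adj_of_mem_B hdisj hbip hb₀ ha
  set F : V → Finset V := fun a => (H.neighborFinset a).erase b₀ with hF
  have hFB : ∀ a ∈ NA, F a ⊆ B := by
    intro a ha x hx
    rw [hF] at hx
    simp only [Finset.mem_erase, SimpleGraph.mem_neighborFinset] at hx
    exact mem_B_of_adj_of_mem_A hdisj hbip (hNAA a ha) hx.2
  have hdisjF : ∀ a ∈ NA, ∀ a' ∈ NA, a ≠ a' → Disjoint (F a) (F a') := by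
    intro a ha a' ha' hne
    rw [Finset.disjoint_left]
    intro x hx hx'
    simp only [hF, Finset.mem_erase, SimpleGraph.mem_neighborFinset] at hx hx'
    rw [hNA, SimpleGraph.mem_neighborFinset] at ha ha'
    exact hC4free b₀ a x a' ha.ne hx.1.symm ha'.ne hx.2.ne hne hx'.2.ne.symm
      ⟨ha, hx.2, hx'.2.symm, ha'.symm⟩
  have hcardF : ∀ a ∈ NA, k ^ 2 - 1 ≤ (F a).card := by
    intro a ha
    have h1 : k ^ 2 ≤ (H.neighborFinset a).card := hmindeg a
    have h3 := Finset.pred_card_le_card_erase (s := H.neighborFinset a) (a := b₀)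
    exact (Nat.sub_le_sub_right h1 1).trans h3
  have hsub : insert b₀ (NA.biUnion F) ⊆ B := by
    intro x hx
    rcases Finset.mem_insert.1 hx with rfl | hx
    · exact hb₀
    · obtain ⟨a, ha, hxa⟩ := Finset.mem_biUnion.1 hx
      exact hFB a ha hxa
  have hnotmem : b₀ ∉ NA.biUnion F := by
    intro h
    obtain ⟨a, _, hxa⟩ := Finset.mem_biUnion.1 h
    simp [hF] at hxa
  have hbu : (NA.biUnion F).card = ∑ a ∈ NA, (F a).card := Finset.card_biUnion hdisjF
  have hsum : NA.card * (k ^ 2 - 1) ≤ ∑ a ∈ NA, (F a).card := by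
    calc NA.card * (k ^ 2 - 1) = ∑ _a ∈ NA, (k ^ 2 - 1) := by
          rw [Finset.sum_const, smul_eq_mul]
      _ ≤ ∑ a ∈ NA, (F a).card := Finset.sum_le_sum hcardF
  have hNAcard : k ^ 2 ≤ NA.card := hmindeg b₀
  have hins := Finset.card_insert_of_notMem hnotmem
  have hle := Finset.card_le_card hsub
  have : k ^ 2 * (k ^ 2 - 1) ≤ NA.card * (k ^ 2 - 1) :=
    Nat.mul_le_mul_right _ hNAcard
  omega

variable (B) in
/-- Number of colored vertices. -/
noncomputable def cnt (c : (V ⊕ {S : Finset V // S ⊆ B ∧ S.card = k}) → Option (Fin k)) : ℕ :=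
  (Finset.univ.filter fun w => (c w).isSome).card

lemma cnt_play_le {c : (V ⊕ {S : Finset V // S ⊆ B ∧ S.card = k}) → Option (Fin k)}
    {v} {a : Fin k} : cnt B (play c v a) ≤ cnt B c + 1 := by
  classical
  have hsub : (Finset.univ.filter fun w => ((play c v a) w).isSome) ⊆
      insert v (Finset.univ.filter fun w => (c w).isSome) := by
    intro w hw
    simp only [Finset.mem_filter, Finset.mem_univ, true_and] at hw
    by_cases hwv : w = v
    · subst hwv; exact Finset.mem_insert_self _ _
    · refine Finset.mem_insert_of_mem ?_
      simp only [Finset.mem_filter, Finset.mem_univ, true_and]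
      unfold play at hw
      rwa [Function.update_of_ne hwv] at hw
  calc (Finset.univ.filter fun w => ((play c v a) w).isSome).card
      ≤ (insert v (Finset.univ.filter fun w => (c w).isSome)).card :=
        Finset.card_le_card hsub
    _ ≤ cnt B c + 1 := Finset.card_insert_le _ _

lemma card_coloredB_le (c : (V ⊕ {S : Finset V // S ⊆ B ∧ S.card = k}) → Option (Fin k)) :
    (B.filter fun b => (c (Sum.inl b)).isSome).card ≤ cnt B c := by
  classical
  apply Finset.card_le_card_of_injOn (fun b => Sum.inl b)
  · intro b hb
    simp only [Finset.mem_coe, Finset.mem_filter] at hb ⊢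
    exact ⟨Finset.mem_univ _, hb.2⟩
  · intro x _ y _ h
    exact Sum.inl.inj h

lemma card_coloredS_le (c : (V ⊕ {S : Finset V // S ⊆ B ∧ S.card = k}) → Option (Fin k)) :
    (Finset.univ.filter
      fun S : {S : Finset V // S ⊆ B ∧ S.card = k} => (c (Sum.inr S)).isSome).card ≤ cnt B c := by
  classical
  apply Finset.card_le_card_of_injOn (fun S => Sum.inr S)
  · intro S hS
    simp only [Finset.mem_coe, Finset.mem_filter, Finset.mem_univ, true_and] at hS ⊢
    exact hS
  · intro x _ y _ h
    exact Sum.inr.inj h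

variable (B) in
/-- `B`-vertices that are either colored or belong to the set of some colored `v_S`. -/
noncomputable def usedB (c : (V ⊕ {S : Finset V // S ⊆ B ∧ S.card = k}) → Option (Fin k)) :
    Finset V :=
  (B.filter fun b => (c (Sum.inl b)).isSome) ∪
    (Finset.univ.filter
      (fun S : {S : Finset V // S ⊆ B ∧ S.card = k} => (c (Sum.inr S)).isSome)).biUnion
      (fun S => S.val)

lemma usedB_card_le (c : (V ⊕ {S : Finset V // S ⊆ B ∧ S.card = k}) → Option (Fin k)) :
    (usedB B c).card ≤ (k + 1) * cnt B c := by
  classical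
  have h1 := card_coloredB_le (B := B) c
  have h2 : ((Finset.univ.filter
      (fun S : {S : Finset V // S ⊆ B ∧ S.card = k} => (c (Sum.inr S)).isSome)).biUnion
      (fun S => S.val)).card ≤ k * cnt B c := by
    calc _ ≤ ∑ S ∈ (Finset.univ.filter
          (fun S : {S : Finset V // S ⊆ B ∧ S.card = k} => (c (Sum.inr S)).isSome)),
          (S.val).card := Finset.card_biUnion_le
      _ = ∑ S ∈ (Finset.univ.filter
          (fun S : {S : Finset V // S ⊆ B ∧ S.card = k} => (c (Sum.inr S)).isSome)), k := by
          apply Finset.sum_congr rfl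
          intro S _
          exact S.2.2
      _ ≤ k * cnt B c := by
          rw [Finset.sum_const, smul_eq_mul]
          exact Nat.mul_le_mul (card_coloredS_le c) le_rfl |>.trans
            (by rw [Nat.mul_comm])
    |>.trans le_rfl
  calc (usedB B c).card ≤ _ + _ := Finset.card_union_le _ _
    _ ≤ cnt B c + k * cnt B c := Nat.add_le_add h1 h2
    _ = (k + 1) * cnt B c := by ring

/-- Choosing `m` fresh `B`-vertices avoiding all used vertices and an extra bad set. -/
lemma exists_fresh (c : (V ⊕ {S : Finset V // S ⊆ B ∧ S.card = k}) → Option (Fin k))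
    (extra : Finset V) (m : ℕ)
    (h : (k + 1) * cnt B c + extra.card + m ≤ B.card) :
    ∃ F ⊆ B \ (usedB B c ∪ extra), F.card = m := by
  classical
  apply Finset.exists_subset_card_eq
  have h1 : B.card ≤ (B \ (usedB B c ∪ extra)).card + (usedB B c ∪ extra).card := by
    calc B.card ≤ (B \ (usedB B c ∪ extra) ∪ (usedB B c ∪ extra)).card :=
          Finset.card_le_card (fun x hx => by
            by_cases hx2 : x ∈ usedB B c ∪ extra
            · exact Finset.mem_union_right _ hx2
            · exact Finset.mem_union_left _ (Finset.mem_sdiff.2 ⟨hx, hx2⟩))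
      _ ≤ (B \ (usedB B c ∪ extra)).card + (usedB B c ∪ extra).card :=
          Finset.card_union_le _ _
  have h2 : (usedB B c ∪ extra).card ≤ (k + 1) * cnt B c + extra.card :=
    (Finset.card_union_le _ _).trans (Nat.add_le_add (usedB_card_le c) le_rfl)
  omega

lemma fresh_uncolored {c : (V ⊕ {S : Finset V // S ⊆ B ∧ S.card = k}) → Option (Fin k)}
    {extra : Finset V} {b : V} (hb : b ∈ B \ (usedB B c ∪ extra)) :
    c (Sum.inl b) = none := by
  classical
  rcases hm : c (Sum.inl b) with _ | a
  · rfl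
  · exfalso
    have := (Finset.mem_sdiff.1 hb).2
    apply this
    apply Finset.mem_union_left
    apply Finset.mem_union_left
    simp only [Finset.mem_filter]
    exact ⟨(Finset.mem_sdiff.1 hb).1, by rw [hm]; rfl⟩

lemma fresh_not_in_colored {c : (V ⊕ {S : Finset V // S ⊆ B ∧ S.card = k}) → Option (Fin k)}
    {extra : Finset V} {b : V} (hb : b ∈ B \ (usedB B c ∪ extra))
    {S : {S : Finset V // S ⊆ B ∧ S.card = k}} (hS : (c (Sum.inr S)).isSome) :
    b ∉ S.val := by
  classical
  intro hmem
  have := (Finset.mem_sdiff.1 hb).2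
  apply this
  apply Finset.mem_union_left
  apply Finset.mem_union_right
  exact Finset.mem_biUnion.2 ⟨S, Finset.mem_filter.2 ⟨Finset.mem_univ _, hS⟩, hmem⟩

variable (B) in
/-- The set of colors appearing on `B`. -/
noncomputable def BC (c : (V ⊕ {S : Finset V // S ⊆ B ∧ S.card = k}) → Option (Fin k)) :
    Finset (Fin k) :=
  Finset.univ.filter fun i => ∃ b ∈ B, c (Sum.inl b) = some i

lemma BC_mono {c : (V ⊕ {S : Finset V // S ⊆ B ∧ S.card = k}) → Option (Fin k)}
    {v} {a : Fin k} (hv : c v = none) : BC B c ⊆ BC B (play c v a) := by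
  intro i hi
  simp only [BC, Finset.mem_filter, Finset.mem_univ, true_and] at hi ⊢
  obtain ⟨b, hb, hcb⟩ := hi
  exact ⟨b, hb, mono_play hv hcb⟩

lemma rinv_of_BC_univ {c : (V ⊕ {S : Finset V // S ⊆ B ∧ S.card = k}) → Option (Fin k)}
    (h : BC B c = Finset.univ) : RInv B k c := by
  intro i
  have : i ∈ BC B c := h ▸ Finset.mem_univ i
  simpa only [BC, Finset.mem_filter, Finset.mem_univ, true_and] using this

lemma mem_BC_of_kill {c : (V ⊕ {S : Finset V // S ⊆ B ∧ S.card = k}) → Option (Fin k)}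
    {z : V} (hz : z ∈ B) {a : Fin k} : a ∈ BC B (play c (Sum.inl z) a) := by
  simp only [BC, Finset.mem_filter, Finset.mem_univ, true_and]
  exact ⟨z, hz, by unfold play; rw [Function.update_self]⟩

end Basic

section MoveBuilder

variable (hk : 3 ≤ k)
  (hadj1 : ∀ u v : V, G.Adj (Sum.inl u) (Sum.inl v) ↔ H.Adj u v)
  (hadj2 : ∀ (S : {S : Finset V // S ⊆ B ∧ S.card = k}) (u : V),
      G.Adj (Sum.inr S) (Sum.inl u) ↔ u ∈ S.val)
  (hadj3 : ∀ (S T : {S : Finset V // S ⊆ B ∧ S.card = k}), ¬ G.Adj (Sum.inr S) (Sum.inr T))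

include hadj2 hadj3 in
/-- Building a legal `v_S`-move: `S = P`, a `k`-subset of `B` containing a colored
"anchor" whose color differs from `γ`, all of whose other members are uncolored, and
containing a completely fresh vertex (so that `v_P` is uncolored). -/
lemma vS_move_legal {c : (V ⊕ {S : Finset V // S ⊆ B ∧ S.card = k}) → Option (Fin k)}
    {P : Finset V} (hPB : P ⊆ B) (hPcard : P.card = k) {γ : Fin k}
    (hmem : ∀ x ∈ P, c (Sum.inl x) ≠ some γ)
    {p : V} (hp : p ∈ P) (hpcol : (c (Sum.inl p)).isSome)
    {f₀ : V} (hf₀ : f₀ ∈ P)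
    (hfresh : ∀ S : {S : Finset V // S ⊆ B ∧ S.card = k},
        (c (Sum.inr S)).isSome → f₀ ∉ S.val) :
    LegalMove true G c (Sum.inr ⟨P, hPB, hPcard⟩) γ := by
  constructor
  · constructor
    · rcases hc : c (Sum.inr ⟨P, hPB, hPcard⟩) with _ | a
      · rfl
      · exact absurd hf₀ (hfresh _ (by rw [hc]; rfl))
    · intro u hu
      rcases u with x | T
      · exact hmem x ((hadj2 _ x).1 hu)
      · exact absurd hu (hadj3 _ _)
  · intro _
    exact Or.inr ⟨Sum.inl p, (hadj2 _ p).2 hp, hpcol⟩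

include hadj2 in
/-- After playing a `v_P`-move with color `γ`, every member of `P` has a neighbor
colored `γ`. -/
lemma vS_move_blocks {c : (V ⊕ {S : Finset V // S ⊆ B ∧ S.card = k}) → Option (Fin k)}
    {P : Finset V} (hPB : P ⊆ B) (hPcard : P.card = k) {γ : Fin k} {z : V} (hz : z ∈ P) :
    ∃ u, G.Adj (Sum.inl z) u ∧
      (play c (Sum.inr ⟨P, hPB, hPcard⟩) γ) u = some γ := by
  refine ⟨Sum.inr ⟨P, hPB, hPcard⟩, G.adj_symm ((hadj2 _ z).2 hz), ?_⟩
  unfold play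
  rw [Function.update_self]

section Helpers

variable (G) in
/-- Vertex `z` has, for every color in `D`, a neighbor with that color. -/
def BlockedOn (c : (V ⊕ {S : Finset V // S ⊆ B ∧ S.card = k}) → Option (Fin k))
    (z : V) (D : Finset (Fin k)) : Prop :=
  ∀ γ ∈ D, ∃ u, G.Adj (Sum.inl z) u ∧ c u = some γ

lemma blockedOn_play {c : (V ⊕ {S : Finset V // S ⊆ B ∧ S.card = k}) → Option (Fin k)}
    {z : V} {D : Finset (Fin k)} {v} {a : Fin k} (hv : c v = none)
    (h : BlockedOn G c z D) : BlockedOn G (play c v a) z D := by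
  intro γ hγ
  obtain ⟨u, hu1, hu2⟩ := h γ hγ
  exact ⟨u, hu1, mono_play hv hu2⟩

lemma play_none {c : (V ⊕ {S : Finset V // S ⊆ B ∧ S.card = k}) → Option (Fin k)}
    {v u} {a : Fin k} (huv : u ≠ v) (hu : c u = none) : play c v a u = none := by
  unfold play
  rwa [Function.update_of_ne huv]

lemma BC_play_inr {c : (V ⊕ {S : Finset V // S ⊆ B ∧ S.card = k}) → Option (Fin k)}
    {X : {S : Finset V // S ⊆ B ∧ S.card = k}} {γ : Fin k} :
    BC B (play c (Sum.inr X) γ) = BC B c := by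
  apply Finset.ext
  intro i
  simp only [BC, Finset.mem_filter, Finset.mem_univ, true_and]
  have hne : ∀ b : V, (Sum.inl b : V ⊕ {S : Finset V // S ⊆ B ∧ S.card = k}) ≠ Sum.inr X := by
    simp
  constructor
  · rintro ⟨b, hb, hcb⟩
    refine ⟨b, hb, ?_⟩
    unfold play at hcb
    rwa [Function.update_of_ne (hne b)] at hcb
  · rintro ⟨b, hb, hcb⟩
    refine ⟨b, hb, ?_⟩
    unfold play
    rwa [Function.update_of_ne (hne b)]

lemma D_full {D : Finset (Fin k)} {μ : Fin k} (hμ : μ ∉ D) (hcard : k - 1 ≤ D.card)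
    (hk : 1 ≤ k) {δ : Fin k} (hδ : δ ∉ D) : δ = μ := by
  classical
  have hsub : D ⊆ Finset.univ.erase μ := fun x hx =>
    Finset.mem_erase.2 ⟨fun h => hμ (h ▸ hx), Finset.mem_univ _⟩
  have hce : (Finset.univ.erase μ).card = k - 1 := by
    rw [Finset.card_erase_of_mem (Finset.mem_univ _), Finset.card_univ, Fintype.card_fin]
  have hDeq : D = Finset.univ.erase μ := Finset.eq_of_subset_of_card_le hsub (by omega)
  by_contra hne
  exact hδ (hDeq ▸ Finset.mem_erase.2 ⟨hne, Finset.mem_univ _⟩)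

lemma not_mem_D_of_proper {c : (V ⊕ {S : Finset V // S ⊆ B ∧ S.card = k}) → Option (Fin k)}
    {z : V} {D : Finset (Fin k)} {δ : Fin k}
    (hb : BlockedOn G c z D) (hp : ProperMove G c (Sum.inl z) δ) : δ ∉ D := by
  intro hδ
  obtain ⟨u, hu1, hu2⟩ := hb δ hδ
  exact hp.2 u hu1 hu2

lemma exists_uncolored_of_cnt_lt {c : (V ⊕ {S : Finset V // S ⊆ B ∧ S.card = k}) → Option (Fin k)}
    (h : cnt B c < B.card) : ∃ w, c w = none := by
  classical
  have h1 := card_coloredB_le (B := B) c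
  have h2 : (B.filter fun b => (c (Sum.inl b)).isSome).card < B.card := by omega
  have hns : ¬ (B ⊆ B.filter fun b => (c (Sum.inl b)).isSome) := fun hs =>
    absurd (Finset.card_le_card hs) (by omega)
  obtain ⟨b, hb, hnb⟩ := Finset.not_subset.1 hns
  refine ⟨Sum.inl b, ?_⟩
  rcases hcb : c (Sum.inl b) with _ | a
  · rfl
  · exact absurd (Finset.mem_filter.2 ⟨hb, by rw [hcb]; rfl⟩) hnb

lemma arith_main (hk : 3 ≤ k) : (k + 1) * (8 + 2 * (k - 1) ^ 2) + 2 * k ≤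
    k ^ 2 * (k ^ 2 - 1) + 1 := by
  obtain ⟨t, rfl⟩ : ∃ t, k = t + 3 := ⟨k - 3, by omega⟩
  have e1 : t + 3 - 1 = t + 2 := by omega
  have e2 : (t + 3) ^ 2 - 1 = t ^ 2 + 6 * t + 8 := by
    have h : (t + 3) ^ 2 = t ^ 2 + 6 * t + 9 := by ring
    omega
  rw [e1, e2]
  nlinarith [sq_nonneg t, Nat.zero_le t, Nat.zero_le (t ^ 3), Nat.zero_le (t ^ 4)]

end Helpers

section States

variable (G B) in
/-- Common core of all mid-game states: proper coloring, two anchors in `B` with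
distinct colors, and at least `e + 2` colors on `B`. -/
def Core (c : (V ⊕ {S : Finset V // S ⊆ B ∧ S.card = k}) → Option (Fin k))
    (e : ℕ) (p₁ p₂ : V) : Prop :=
  PInv G k c ∧ p₁ ∈ B ∧ p₂ ∈ B ∧
    (∃ β₁ β₂ : Fin k, c (Sum.inl p₁) = some β₁ ∧ c (Sum.inl p₂) = some β₂ ∧ β₁ ≠ β₂) ∧
    e + 2 ≤ (BC B c).card

variable (G B) in
/-- Out-of-cycle state, Alice to move. -/
def SOutA (c : (V ⊕ {S : Finset V // S ⊆ B ∧ S.card = k}) → Option (Fin k)) : Prop :=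
  ∃ (e : ℕ) (p₁ p₂ : V), Core B G c e p₁ p₂ ∧ cnt B c ≤ 6 + 2 * (k - 1) * e

variable (G B) in
/-- Out-of-cycle state, Bob to move. -/
def SOutB (c : (V ⊕ {S : Finset V // S ⊆ B ∧ S.card = k}) → Option (Fin k)) : Prop :=
  ∃ (e : ℕ) (p₁ p₂ : V), Core B G c e p₁ p₂ ∧ cnt B c ≤ 7 + 2 * (k - 1) * e

variable (G B) in
/-- In-cycle state, Alice to move: `Z` is the current cohort, blocked on all colors
of `D`, and `μ` is the color the cycle is squeezing onto `B`. -/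
def SCycA (c : (V ⊕ {S : Finset V // S ⊆ B ∧ S.card = k}) → Option (Fin k)) : Prop :=
  ∃ (e : ℕ) (p₁ p₂ : V) (μ : Fin k) (D : Finset (Fin k)) (Z : Finset V),
    Core B G c e p₁ p₂ ∧
    (μ ∉ BC B c ∨ e + 3 ≤ (BC B c).card) ∧
    μ ∉ D ∧ 1 ≤ D.card ∧ D.card ≤ k - 1 ∧
    Z ⊆ B ∧ (∀ z ∈ Z, c (Sum.inl z) = none) ∧ (∀ z ∈ Z, BlockedOn G c z D) ∧
    (μ ∈ BC B c ∨ k - D.card ≤ Z.card) ∧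
    cnt B c ≤ 6 + 2 * (k - 1) * e + 2 * D.card

variable (G B) in
/-- In-cycle state, Bob to move. -/
def SCycB (c : (V ⊕ {S : Finset V // S ⊆ B ∧ S.card = k}) → Option (Fin k)) : Prop :=
  ∃ (e : ℕ) (p₁ p₂ : V) (μ : Fin k) (D : Finset (Fin k)) (Z : Finset V),
    Core B G c e p₁ p₂ ∧
    (μ ∉ BC B c ∨ e + 3 ≤ (BC B c).card) ∧
    μ ∉ D ∧ 1 ≤ D.card ∧ D.card ≤ k - 1 ∧
    Z ⊆ B ∧ (∀ z ∈ Z, c (Sum.inl z) = none) ∧ (∀ z ∈ Z, BlockedOn G c z D) ∧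
    (μ ∈ BC B c ∨ (k - 1 - D.card ≤ Z.card ∧ 1 ≤ Z.card)) ∧
    cnt B c ≤ 7 + 2 * (k - 1) * e + 2 * D.card

lemma core_play {c : (V ⊕ {S : Finset V // S ⊆ B ∧ S.card = k}) → Option (Fin k)}
    {e : ℕ} {p₁ p₂ : V} (h : Core B G c e p₁ p₂) {w} {δ : Fin k}
    (hleg : LegalMove true G c w δ) : Core B G (play c w δ) e p₁ p₂ := by
  obtain ⟨hPI, hp₁B, hp₂B, ⟨β₁, β₂, hc₁, hc₂, hββ⟩, hBCe⟩ := h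
  exact ⟨pinv_play hleg.1 hPI, hp₁B, hp₂B,
    ⟨β₁, β₂, mono_play hleg.1.1 hc₁, mono_play hleg.1.1 hc₂, hββ⟩,
    le_trans hBCe (Finset.card_le_card (BC_mono hleg.1.1))⟩

lemma alice_step_out {c : (V ⊕ {S : Finset V // S ⊆ B ∧ S.card = k}) → Option (Fin k)}
    (h : SOutA B G c) {w} {δ : Fin k} (hleg : LegalMove true G c w δ) :
    SOutB B G (play c w δ) := by
  obtain ⟨e, p₁, p₂, hcore, hcnt⟩ := h
  exact ⟨e, p₁, p₂, core_play hcore hleg, le_trans cnt_play_le (by omega)⟩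

lemma alice_step_cyc (hk : 3 ≤ k)
    {c : (V ⊕ {S : Finset V // S ⊆ B ∧ S.card = k}) → Option (Fin k)}
    (h : SCycA B G c) {w} {δ : Fin k} (hleg : LegalMove true G c w δ) :
    SCycB B G (play c w δ) := by
  classical
  obtain ⟨e, p₁, p₂, μ, D, Z, hcore, hμBC, hμD, hD1, hDk, hZB, hZunc, hZblk, hsize, hcnt⟩ := h
  have hwnone : c w = none := hleg.1.1
  have hBCsub : BC B c ⊆ BC B (play c w δ) := BC_mono hwnone
  refine ⟨e, p₁, p₂, μ, D, Z.filter (fun z => (play c w δ) (Sum.inl z) = none),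
    core_play hcore hleg, ?_, hμD, hD1, hDk,
    (Finset.filter_subset _ _).trans hZB,
    fun z hz => (Finset.mem_filter.1 hz).2,
    fun z hz => blockedOn_play hwnone (hZblk z (Finset.mem_filter.1 hz).1),
    ?_, le_trans cnt_play_le (by omega)⟩
  · rcases hμBC with h | h
    · by_cases hμ' : μ ∈ BC B (play c w δ)
      · right
        have hsub2 : insert μ (BC B c) ⊆ BC B (play c w δ) := Finset.insert_subset hμ' hBCsub
        have hcard2 := Finset.card_le_card hsub2
        rw [Finset.card_insert_of_notMem h] at hcard2
        have := hcore.2.2.2.2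
        omega
      · exact Or.inl hμ'
    · exact Or.inr (le_trans h (Finset.card_le_card hBCsub))
  · rcases hsize with hμin | hZc
    · exact Or.inl (hBCsub hμin)
    · by_cases hkill : ∃ z ∈ Z, w = Sum.inl z
      · obtain ⟨z₀, hz₀, rfl⟩ := hkill
        have hδD : δ ∉ D := not_mem_D_of_proper (hZblk z₀ hz₀) hleg.1
        by_cases hδμ : δ = μ
        · left
          subst hδμ
          exact mem_BC_of_kill (hZB hz₀)
        · have hDfull : ¬ (k - 1 ≤ D.card) := by
            intro hf
            exact hδμ (D_full hμD hf (by omega) hδD)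
          right
          have hsub3 : Z.erase z₀ ⊆ Z.filter
              (fun z => (play c (Sum.inl z₀) δ) (Sum.inl z) = none) := by
            intro z hz
            obtain ⟨hne, hzZ⟩ := Finset.mem_erase.1 hz
            exact Finset.mem_filter.2 ⟨hzZ,
              play_none (by simpa using hne) (hZunc z hzZ)⟩
          have hcard3 := Finset.card_le_card hsub3
          have hcard4 := Finset.card_erase_of_mem hz₀
          constructor
          · omega
          · omega
      · right
        have hsub3 : Z ⊆ Z.filter (fun z => (play c w δ) (Sum.inl z) = none) := by
          intro z hz
          refine Finset.mem_filter.2 ⟨hz, play_none ?_ (hZunc z hz)⟩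
          intro hzw
          exact hkill ⟨z, hz, hzw.symm⟩
        have hcard3 := Finset.card_le_card hsub3
        constructor
        · omega
        · omega

end States

section BobMoves

variable (hk : 3 ≤ k)
  (hadj2 : ∀ (S : {S : Finset V // S ⊆ B ∧ S.card = k}) (u : V),
      G.Adj (Sum.inr S) (Sum.inl u) ↔ u ∈ S.val)
  (hadj3 : ∀ (S T : {S : Finset V // S ⊆ B ∧ S.card = k}), ¬ G.Adj (Sum.inr S) (Sum.inr T))
  (hBcard : k ^ 2 * (k ^ 2 - 1) + 1 ≤ B.card)

lemma BC_card_le (c : (V ⊕ {S : Finset V // S ⊆ B ∧ S.card = k}) → Option (Fin k)) :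
    (BC B c).card ≤ k :=
  le_trans (Finset.card_le_univ _) (by simp)

include hk in
lemma exists_ne_color (μ : Fin k) : ∃ γ : Fin k, γ ≠ μ := by
  refine ⟨if μ = ⟨0, by omega⟩ then ⟨1, by omega⟩ else ⟨0, by omega⟩, ?_⟩
  split
  · rename_i h
    rw [h]
    simp [Fin.ext_iff]
  · rename_i h
    exact fun hh => h hh.symm

include hk hBcard in
lemma supply_ok {c : (V ⊕ {S : Finset V // S ⊆ B ∧ S.card = k}) → Option (Fin k)}
    {e d : ℕ} (he : e ≤ k - 2) (hd : d ≤ k - 1)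
    (hcnt : cnt B c ≤ 7 + 2 * (k - 1) * e + 2 * d)
    {m x : ℕ} (hm : m ≤ k - 1) (hx : x ≤ k) :
    (k + 1) * cnt B c + x + m ≤ B.card := by
  have t1 : 2 * (k - 1) * e ≤ 2 * (k - 1) * (k - 2) := Nat.mul_le_mul_left _ he
  have hc2 : cnt B c ≤ 7 + 2 * (k - 1) * (k - 2) + 2 * (k - 1) := by omega
  have heq : 7 + 2 * (k - 1) * (k - 2) + 2 * (k - 1) = 7 + 2 * (k - 1) ^ 2 := by
    have h2 : k - 2 + 1 = k - 1 := by omega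
    calc 7 + 2 * (k - 1) * (k - 2) + 2 * (k - 1) = 7 + 2 * (k - 1) * ((k - 2) + 1) := by ring
      _ = 7 + 2 * (k - 1) ^ 2 := by rw [h2]; ring
  have hc3 : cnt B c ≤ 7 + 2 * (k - 1) ^ 2 := heq ▸ hc2
  have t2 : (k + 1) * cnt B c ≤ (k + 1) * (7 + 2 * (k - 1) ^ 2) :=
    Nat.mul_le_mul_left _ hc3
  have t3 : (k + 1) * (8 + 2 * (k - 1) ^ 2) = (k + 1) * (7 + 2 * (k - 1) ^ 2) + (k + 1) := by
    ring
  have t4 := arith_main hk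
  calc (k + 1) * cnt B c + x + m
      ≤ (k + 1) * (7 + 2 * (k - 1) ^ 2) + k + (k - 1) :=
        Nat.add_le_add (Nat.add_le_add t2 hx) hm
    _ ≤ (k + 1) * (8 + 2 * (k - 1) ^ 2) + 2 * k := by omega
    _ ≤ k ^ 2 * (k ^ 2 - 1) + 1 := t4
    _ ≤ B.card := hBcard

include hk hBcard in
lemma cnt_lt_Bcard {c : (V ⊕ {S : Finset V // S ⊆ B ∧ S.card = k}) → Option (Fin k)}
    {e d : ℕ} (he : e ≤ k - 2) (hd : d ≤ k - 1)
    (hcnt : cnt B c ≤ 7 + 2 * (k - 1) * e + 2 * d) : cnt B c < B.card := by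
  have h := supply_ok hk hBcard he hd hcnt (m := 1) (x := 0) (by omega) (by omega)
  have h2 : cnt B c ≤ (k + 1) * cnt B c := Nat.le_mul_of_pos_left _ (by omega)
  omega

include hk hadj2 hadj3 hBcard in
/-- Bob's cycle-opening move from an out-of-cycle position. -/
lemma bob_birth {c : (V ⊕ {S : Finset V // S ⊆ B ∧ S.card = k}) → Option (Fin k)}
    (h : SOutB B G c) (hBC : BC B c ≠ Finset.univ) :
    ∃ w γ, LegalMove true G c w γ ∧ SCycA B G (play c w γ) := by
  classical
  obtain ⟨e, p₁, p₂, hcore, hcnt⟩ := h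
  obtain ⟨hPI, hp₁B, hp₂B, ⟨β₁, β₂, hc₁, hc₂, hββ⟩, hBCe⟩ := hcore
  have hμex : (Finset.univ \ BC B c).Nonempty := by
    rw [Finset.sdiff_nonempty]
    intro hsub
    exact hBC (Finset.univ_subset_iff.1 hsub)
  obtain ⟨μ, hμmem⟩ := hμex
  have hμBC : μ ∉ BC B c := (Finset.mem_sdiff.1 hμmem).2
  obtain ⟨γ, hγμ⟩ := exists_ne_color hk μ
  -- anchor with color ≠ γ
  obtain ⟨p, βₚ, hpB, hpc, hβγ⟩ :
      ∃ p βₚ, p ∈ B ∧ c (Sum.inl p) = some βₚ ∧ βₚ ≠ γ := by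
    by_cases hb : β₁ = γ
    · exact ⟨p₂, β₂, hp₂B, hc₂, fun hh => hββ (hb ▸ hh ▸ rfl)⟩
    · exact ⟨p₁, β₁, hp₁B, hc₁, hb⟩
  have heK : e ≤ k - 2 := by
    have := BC_card_le (B := B) c
    omega
  have hsup : (k + 1) * cnt B c + ({p} : Finset V).card + (k - 1) ≤ B.card := by
    have := supply_ok hk hBcard (c := c) heK (d := 0) (by omega) (by omega)
      (m := k - 1) (x := ({p} : Finset V).card) (by omega)
      (by rw [Finset.card_singleton]; omega)
    omega
  obtain ⟨F, hFsub, hFcard⟩ := exists_fresh c {p} (k - 1) hsup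
  have hpF : p ∉ F := fun hh =>
    (Finset.mem_sdiff.1 (hFsub hh)).2 (Finset.mem_union_right _ (Finset.mem_singleton_self p))
  have hFB : F ⊆ B := fun x hx => (Finset.mem_sdiff.1 (hFsub hx)).1
  have hFunc : ∀ x ∈ F, c (Sum.inl x) = none := fun x hx => fresh_uncolored (hFsub hx)
  have hPcard : (insert p F).card = k := by
    rw [Finset.card_insert_of_notMem hpF, hFcard]
    omega
  have hPB : insert p F ⊆ B := Finset.insert_subset hpB hFB
  have hmem : ∀ x ∈ insert p F, c (Sum.inl x) ≠ some γ := by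
    intro x hx
    rcases Finset.mem_insert.1 hx with rfl | hx
    · rw [hpc]
      intro hh
      exact hβγ (by injection hh)
    · rw [hFunc x hx]
      simp
  have hFne : F.Nonempty := Finset.card_pos.1 (by omega)
  obtain ⟨f₀, hf₀⟩ := hFne
  have hleg : LegalMove true G c (Sum.inr ⟨insert p F, hPB, hPcard⟩) γ :=
    vS_move_legal hadj2 hadj3 hPB hPcard hmem (Finset.mem_insert_self p F)
      (by rw [hpc]; rfl) (Finset.mem_insert_of_mem hf₀)
      (fun S hS => fresh_not_in_colored (hFsub hf₀) hS)
  refine ⟨_, γ, hleg, e, p₁, p₂, μ, {γ}, F, core_play ⟨hPI, hp₁B, hp₂B,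
    ⟨β₁, β₂, hc₁, hc₂, hββ⟩, hBCe⟩ hleg, ?_, ?_, ?_, ?_, hFB, ?_, ?_, ?_, ?_⟩
  · left
    rw [BC_play_inr]
    exact hμBC
  · simp only [Finset.mem_singleton]
    exact fun hh => hγμ hh.symm
  · simp
  · rw [Finset.card_singleton]
    omega
  · intro z hz
    exact play_none (by simp) (hFunc z hz)
  · intro z hz γ' hγ'
    rw [Finset.mem_singleton] at hγ'
    subst hγ'
    exact vS_move_blocks hadj2 hPB hPcard (Finset.mem_insert_of_mem hz)
  · right
    rw [Finset.card_singleton, hFcard]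
  · have := cnt_play_le (B := B) (c := c)
      (v := (Sum.inr ⟨insert p F, hPB, hPcard⟩ : V ⊕ {S : Finset V // S ⊆ B ∧ S.card = k}))
      (a := γ)
    rw [Finset.card_singleton]
    omega

include hk hadj2 hadj3 hBcard in
/-- Bob's upgrade move inside a cycle. -/
lemma bob_upgrade {c : (V ⊕ {S : Finset V // S ⊆ B ∧ S.card = k}) → Option (Fin k)}
    {e : ℕ} {p₁ p₂ : V} {μ : Fin k} {D : Finset (Fin k)} {Z : Finset V}
    (hcore : Core B G c e p₁ p₂)
    (hμBC : μ ∉ BC B c) (hμD : μ ∉ D) (hD1 : 1 ≤ D.card) (hDk : D.card ≤ k - 2)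
    (hZB : Z ⊆ B) (hZunc : ∀ z ∈ Z, c (Sum.inl z) = none)
    (hZblk : ∀ z ∈ Z, BlockedOn G c z D)
    (hZD : k - 1 - D.card ≤ Z.card) (hZ1 : 1 ≤ Z.card)
    (hcnt : cnt B c ≤ 7 + 2 * (k - 1) * e + 2 * D.card) :
    ∃ w γ, LegalMove true G c w γ ∧ SCycA B G (play c w γ) := by
  classical
  obtain ⟨hPI, hp₁B, hp₂B, ⟨β₁, β₂, hc₁, hc₂, hββ⟩, hBCe⟩ := hcore
  -- new color
  have hγex : (Finset.univ \ insert μ D).Nonempty := by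
    rw [← Finset.card_pos, Finset.card_sdiff_of_subset (Finset.subset_univ _)]
    have h1 := Finset.card_insert_le μ D
    have h2 : (Finset.univ : Finset (Fin k)).card = k := by simp
    omega
  obtain ⟨γ, hγmem⟩ := hγex
  have hγD : γ ∉ D := fun hh =>
    (Finset.mem_sdiff.1 hγmem).2 (Finset.mem_insert_of_mem hh)
  have hγμ : γ ≠ μ := fun hh =>
    (Finset.mem_sdiff.1 hγmem).2 (hh ▸ Finset.mem_insert_self μ D)
  -- anchor with color ≠ γ
  obtain ⟨p, βₚ, hpB, hpc, hβγ⟩ :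
      ∃ p βₚ, p ∈ B ∧ c (Sum.inl p) = some βₚ ∧ βₚ ≠ γ := by
    by_cases hb : β₁ = γ
    · exact ⟨p₂, β₂, hp₂B, hc₂, fun hh => hββ (hb ▸ hh ▸ rfl)⟩
    · exact ⟨p₁, β₁, hp₁B, hc₁, hb⟩
  have heK : e ≤ k - 2 := by
    have := BC_card_le (B := B) c
    omega
  -- truncated cohort
  obtain ⟨W, hWZ, hWcard⟩ := Finset.exists_subset_card_eq (min_le_left Z.card (k - 2))
  have hWk2 : W.card ≤ k - 2 := by rw [hWcard]; omega
  have hWge : k - 1 - D.card ≤ W.card := by rw [hWcard]; omega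
  have hW1 : 1 ≤ W.card := by rw [hWcard]; omega
  have hxcard : (insert p W).card ≤ k :=
    le_trans (Finset.card_insert_le _ _) (by omega)
  have hsup : (k + 1) * cnt B c + (insert p W).card + (k - 1 - W.card) ≤ B.card := by
    have := supply_ok hk hBcard heK (d := D.card) (by omega) hcnt
      (m := k - 1 - W.card) (x := (insert p W).card) (by omega) hxcard
    omega
  obtain ⟨F, hFsub, hFcard⟩ := exists_fresh c (insert p W) (k - 1 - W.card) hsup
  have hFB : F ⊆ B := fun x hx => (Finset.mem_sdiff.1 (hFsub hx)).1
  have hFunc : ∀ x ∈ F, c (Sum.inl x) = none := fun x hx => fresh_uncolored (hFsub hx)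
  have hpW : p ∉ W := fun hh => by rw [hZunc p (hWZ hh)] at hpc; cases hpc
  have hpF : p ∉ F := fun hh => (Finset.mem_sdiff.1 (hFsub hh)).2
    (Finset.mem_union_right _ (Finset.mem_insert_self _ _))
  have hWF : Disjoint W F := Finset.disjoint_left.2 (fun {x} hxW hxF =>
    (Finset.mem_sdiff.1 (hFsub hxF)).2
      (Finset.mem_union_right _ (Finset.mem_insert_of_mem hxW)))
  have hpQ : p ∉ W ∪ F := by
    rw [Finset.mem_union]
    rintro (h | h)
    · exact hpW h
    · exact hpF h
  have hQcard : (W ∪ F).card = k - 1 := by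
    rw [Finset.card_union_of_disjoint hWF, hFcard]
    omega
  have hPcard : (insert p (W ∪ F)).card = k := by
    rw [Finset.card_insert_of_notMem hpQ, hQcard]
    omega
  have hPB : insert p (W ∪ F) ⊆ B :=
    Finset.insert_subset hpB (Finset.union_subset (hWZ.trans hZB) hFB)
  have hQunc : ∀ x ∈ W ∪ F, c (Sum.inl x) = none := by
    intro x hx
    rcases Finset.mem_union.1 hx with hx | hx
    · exact hZunc x (hWZ hx)
    · exact hFunc x hx
  have hmem : ∀ x ∈ insert p (W ∪ F), c (Sum.inl x) ≠ some γ := by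
    intro x hx
    rcases Finset.mem_insert.1 hx with rfl | hx
    · rw [hpc]
      intro hh
      exact hβγ (by injection hh)
    · rw [hQunc x hx]
      simp
  have hFne : F.Nonempty := Finset.card_pos.1 (by omega)
  obtain ⟨f₀, hf₀⟩ := hFne
  have hleg : LegalMove true G c (Sum.inr ⟨insert p (W ∪ F), hPB, hPcard⟩) γ :=
    vS_move_legal hadj2 hadj3 hPB hPcard hmem (Finset.mem_insert_self _ _)
      (by rw [hpc]; rfl)
      (Finset.mem_insert_of_mem (Finset.mem_union_right _ hf₀))
      (fun S hS => fresh_not_in_colored (hFsub hf₀) hS)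
  refine ⟨_, γ, hleg, e, p₁, p₂, μ, insert γ D, W,
    core_play ⟨hPI, hp₁B, hp₂B, ⟨β₁, β₂, hc₁, hc₂, hββ⟩, hBCe⟩ hleg, ?_, ?_, ?_, ?_,
    hWZ.trans hZB, ?_, ?_, ?_, ?_⟩
  · left
    rw [BC_play_inr]
    exact hμBC
  · intro hh
    rcases Finset.mem_insert.1 hh with hh | hh
    · exact hγμ hh.symm
    · exact hμD hh
  · rw [Finset.card_insert_of_notMem hγD]
    omega
  · rw [Finset.card_insert_of_notMem hγD]
    omega
  · intro z hz
    exact play_none (by simp) (hZunc z (hWZ hz))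
  · intro z hz γ' hγ'
    rcases Finset.mem_insert.1 hγ' with rfl | hγ'
    · exact vS_move_blocks hadj2 hPB hPcard
        (Finset.mem_insert_of_mem (Finset.mem_union_left _ hz))
    · exact blockedOn_play hleg.1.1 (hZblk z (hWZ hz)) γ' hγ'
  · right
    rw [Finset.card_insert_of_notMem hγD]
    omega
  · rw [Finset.card_insert_of_notMem hγD]
    have := cnt_play_le (B := B) (c := c)
      (v := (Sum.inr ⟨insert p (W ∪ F), hPB, hPcard⟩ :
        V ⊕ {S : Finset V // S ⊆ B ∧ S.card = k})) (a := γ)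
    omega

include hk hadj2 hadj3 hBcard in
/-- Bob's completion move: produces a blocked vertex. -/
lemma bob_complete {c : (V ⊕ {S : Finset V // S ⊆ B ∧ S.card = k}) → Option (Fin k)}
    {e : ℕ} {p₁ p₂ : V} {μ : Fin k} {D : Finset (Fin k)} {Z : Finset V}
    (hcore : Core B G c e p₁ p₂)
    (hμD : μ ∉ D) (hDk1 : k - 1 ≤ D.card) (hDk : D.card ≤ k - 1)
    (hZB : Z ⊆ B) (hZunc : ∀ z ∈ Z, c (Sum.inl z) = none)
    (hZblk : ∀ z ∈ Z, BlockedOn G c z D) (hZ1 : 1 ≤ Z.card)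
    (hcnt : cnt B c ≤ 7 + 2 * (k - 1) * e + 2 * D.card) :
    ∃ w γ, LegalMove true G c w γ ∧ ∃ z, Blocked G k (play c w γ) z := by
  classical
  obtain ⟨hPI, hp₁B, hp₂B, ⟨β₁, β₂, hc₁, hc₂, hββ⟩, hBCe⟩ := hcore
  obtain ⟨z₀, hz₀⟩ := Finset.card_pos.1 hZ1
  have hz₀unc : c (Sum.inl z₀) = none := hZunc z₀ hz₀
  obtain ⟨p, βₚ, hpB, hpc, hβμ⟩ :
      ∃ p βₚ, p ∈ B ∧ c (Sum.inl p) = some βₚ ∧ βₚ ≠ μ := by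
    by_cases hb : β₁ = μ
    · exact ⟨p₂, β₂, hp₂B, hc₂, fun hh => hββ (hb ▸ hh ▸ rfl)⟩
    · exact ⟨p₁, β₁, hp₁B, hc₁, hb⟩
  have heK : e ≤ k - 2 := by
    have := BC_card_le (B := B) c
    omega
  have hxcard : (insert p {z₀} : Finset V).card ≤ k :=
    le_trans (Finset.card_insert_le _ _) (by rw [Finset.card_singleton]; omega)
  have hsup : (k + 1) * cnt B c + (insert p {z₀} : Finset V).card + (k - 2) ≤ B.card := by
    have := supply_ok hk hBcard heK (d := D.card) hDk hcnt
      (m := k - 2) (x := (insert p {z₀} : Finset V).card) (by omega) hxcard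
    omega
  obtain ⟨F, hFsub, hFcard⟩ := exists_fresh c (insert p {z₀}) (k - 2) hsup
  have hFB : F ⊆ B := fun x hx => (Finset.mem_sdiff.1 (hFsub hx)).1
  have hFunc : ∀ x ∈ F, c (Sum.inl x) = none := fun x hx => fresh_uncolored (hFsub hx)
  have hpz₀ : p ≠ z₀ := fun hh => by rw [hh, hz₀unc] at hpc; cases hpc
  have hpF : p ∉ F := fun hh => (Finset.mem_sdiff.1 (hFsub hh)).2
    (Finset.mem_union_right _ (Finset.mem_insert_self _ _))
  have hz₀F : z₀ ∉ F := fun hh => (Finset.mem_sdiff.1 (hFsub hh)).2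
    (Finset.mem_union_right _ (Finset.mem_insert_of_mem (Finset.mem_singleton_self _)))
  have hpQ : p ∉ insert z₀ F := by
    rw [Finset.mem_insert]
    rintro (h | h)
    · exact hpz₀ h
    · exact hpF h
  have hQcard : (insert z₀ F).card = k - 1 := by
    rw [Finset.card_insert_of_notMem hz₀F, hFcard]
    omega
  have hPcard : (insert p (insert z₀ F)).card = k := by
    rw [Finset.card_insert_of_notMem hpQ, hQcard]
    omega
  have hPB : insert p (insert z₀ F) ⊆ B :=
    Finset.insert_subset hpB (Finset.insert_subset (hZB hz₀) hFB)
  have hQunc : ∀ x ∈ insert z₀ F, c (Sum.inl x) = none := by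
    intro x hx
    rcases Finset.mem_insert.1 hx with rfl | hx
    · exact hz₀unc
    · exact hFunc x hx
  have hmem : ∀ x ∈ insert p (insert z₀ F), c (Sum.inl x) ≠ some μ := by
    intro x hx
    rcases Finset.mem_insert.1 hx with rfl | hx
    · rw [hpc]
      intro hh
      exact hβμ (by injection hh)
    · rw [hQunc x hx]
      simp
  have hFne : F.Nonempty := Finset.card_pos.1 (by omega)
  obtain ⟨f₀, hf₀⟩ := hFne
  have hleg : LegalMove true G c (Sum.inr ⟨insert p (insert z₀ F), hPB, hPcard⟩) μ :=
    vS_move_legal hadj2 hadj3 hPB hPcard hmem (Finset.mem_insert_self _ _)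
      (by rw [hpc]; rfl)
      (Finset.mem_insert_of_mem (Finset.mem_insert_of_mem hf₀))
      (fun S hS => fresh_not_in_colored (hFsub hf₀) hS)
  refine ⟨_, μ, hleg, Sum.inl z₀, ?_, ?_⟩
  · exact play_none (by simp) hz₀unc
  · intro i
    by_cases hi : i ∈ D
    · exact blockedOn_play hleg.1.1 (hZblk z₀ hz₀) i hi
    · have hiμ : i = μ := D_full hμD hDk1 (by omega) hi
      subst hiμ
      exact vS_move_blocks hadj2 hPB hPcard
        (Finset.mem_insert_of_mem (Finset.mem_insert_self _ _))

end BobMoves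

end MoveBuilder

section Master

variable (hk : 3 ≤ k)
  (hadj2 : ∀ (S : {S : Finset V // S ⊆ B ∧ S.card = k}) (u : V),
      G.Adj (Sum.inr S) (Sum.inl u) ↔ u ∈ S.val)
  (hadj3 : ∀ (S T : {S : Finset V // S ⊆ B ∧ S.card = k}), ¬ G.Adj (Sum.inr S) (Sum.inr T))
  (hBcard : k ^ 2 * (k ^ 2 - 1) + 1 ≤ B.card)

include hk hBcard in
lemma uncolored_of_bounds {c : (V ⊕ {S : Finset V // S ⊆ B ∧ S.card = k}) → Option (Fin k)}
    {e d : ℕ} (hBCe : e + 2 ≤ (BC B c).card) (hd : d ≤ k - 1)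
    (hcnt : cnt B c ≤ 7 + 2 * (k - 1) * e + 2 * d) : ∃ w, c w = none := by
  have heK : e ≤ k - 2 := by
    have := BC_card_le (B := B) c
    omega
  exact exists_uncolored_of_cnt_lt (cnt_lt_Bcard hk hBcard heK hd hcnt)

include hk hBcard in
lemma state_uncolored {c : (V ⊕ {S : Finset V // S ⊆ B ∧ S.card = k}) → Option (Fin k)}
    (h : (SOutB B G c ∨ SCycB B G c) ∨ (SOutA B G c ∨ SCycA B G c)) :
    ∃ w, c w = none := by
  rcases h with (h | h) | (h | h)
  · obtain ⟨e, p₁, p₂, hcore, hcnt⟩ := h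
    exact uncolored_of_bounds hk hBcard (d := 0) hcore.2.2.2.2 (by omega) (by omega)
  · obtain ⟨e, p₁, p₂, μ, D, Z, hcore, _, _, hD1, hDk, _, _, _, _, hcnt⟩ := h
    exact uncolored_of_bounds hk hBcard (d := D.card) hcore.2.2.2.2 hDk (by omega)
  · obtain ⟨e, p₁, p₂, hcore, hcnt⟩ := h
    exact uncolored_of_bounds hk hBcard (d := 0) hcore.2.2.2.2 (by omega) (by omega)
  · obtain ⟨e, p₁, p₂, μ, D, Z, hcore, _, _, hD1, hDk, _, _, _, _, hcnt⟩ := h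
    exact uncolored_of_bounds hk hBcard (d := D.card) hcore.2.2.2.2 hDk (by omega)

include hk hadj2 hadj3 hBcard in
/-- The master induction: from any of the four states, Bob wins. -/
lemma master : ∀ n : ℕ,
    (∀ c, SOutB B G c ∨ SCycB B G c → BobWinsFrom true G k n false c) ∧
    (∀ c, SOutA B G c ∨ SCycA B G c → BobWinsFrom true G k n true c) := by
  intro n
  induction n with
  | zero =>
    exact ⟨fun c h => state_uncolored hk hBcard (Or.inl h),
      fun c h => state_uncolored hk hBcard (Or.inr h)⟩
  | succ n ih =>
    obtain ⟨ihB, ihA⟩ := ih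
    have hOutHandler : ∀ c, SOutB B G c → BobWinsFrom true G k (n + 1) false c := by
      intro c h
      have hex := state_uncolored hk hBcard (G := G) (Or.inl (Or.inl h))
      obtain ⟨e, p₁, p₂, hcore, hcnt⟩ := h
      by_cases hBC : BC B c = Finset.univ
      · exact bobWinsFrom_of_rainbow hadj2 (n + 1) false c hcore.1 (rinv_of_BC_univ hBC)
      · obtain ⟨w, γ, hleg, hnext⟩ :=
          bob_birth hk hadj2 hadj3 hBcard ⟨e, p₁, p₂, hcore, hcnt⟩ hBC
        refine ⟨hex, ?_⟩
        simp only [if_neg (by simp : ¬ (false = true))]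
        exact Or.inr ⟨w, γ, hleg, ihA _ (Or.inr hnext)⟩
    have hCycHandler : ∀ c, SCycB B G c → BobWinsFrom true G k (n + 1) false c := by
      intro c h
      have hex := state_uncolored hk hBcard (G := G) (Or.inl (Or.inr h))
      obtain ⟨e, p₁, p₂, μ, D, Z, hcore, hμdisj, hμD, hD1, hDk, hZB, hZunc, hZblk,
        hsize, hcnt⟩ := h
      by_cases hμBC : μ ∈ BC B c
      · apply hOutHandler
        refine ⟨e + 1, p₁, p₂,
          ⟨hcore.1, hcore.2.1, hcore.2.2.1, hcore.2.2.2.1, ?_⟩, ?_⟩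
        · rcases hμdisj with h' | h'
          · exact absurd hμBC h'
          · omega
        · have hr : 2 * (k - 1) * (e + 1) = 2 * (k - 1) * e + 2 * (k - 1) := by ring
          omega
      · have hsz : k - 1 - D.card ≤ Z.card ∧ 1 ≤ Z.card := by
          rcases hsize with h' | h'
          · exact absurd h' hμBC
          · exact h'
        by_cases hD : k - 1 ≤ D.card
        · obtain ⟨w, γ, hleg, z, hblk⟩ := bob_complete hk hadj2 hadj3 hBcard hcore
            hμD hD hDk hZB hZunc hZblk hsz.2 hcnt
          refine ⟨hex, ?_⟩
          simp only [if_neg (by simp : ¬ (false = true))]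
          exact Or.inr ⟨w, γ, hleg, bobWinsFrom_of_blocked n true _ z hblk⟩
        · obtain ⟨w, γ, hleg, hnext⟩ := bob_upgrade hk hadj2 hadj3 hBcard hcore
            hμBC hμD hD1 (by omega) hZB hZunc hZblk hsz.1 hsz.2 hcnt
          refine ⟨hex, ?_⟩
          simp only [if_neg (by simp : ¬ (false = true))]
          exact Or.inr ⟨w, γ, hleg, ihA _ (Or.inr hnext)⟩
    refine ⟨fun c h => ?_, fun c h => ?_⟩
    · rcases h with h | h
      · exact hOutHandler c h
      · exact hCycHandler c h
    · have hex := state_uncolored hk hBcard (G := G) (Or.inr h)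
      refine ⟨hex, ?_⟩
      simp only [if_pos rfl]
      intro w δ hleg
      rcases h with h | h
      · exact ihB _ (Or.inl (alice_step_out h hleg))
      · exact ihB _ (Or.inr (alice_step_cyc hk h hleg))

section Setup

variable (hk : 3 ≤ k)
  (hdisj : Disjoint A B)
  (hbip : ∀ u v, H.Adj u v → (u ∈ A ∧ v ∈ B) ∨ (u ∈ B ∧ v ∈ A))
  (hC4free : ∀ a b c d : V, a ≠ b → a ≠ c → a ≠ d → b ≠ c → b ≠ d → c ≠ d →
      ¬(H.Adj a b ∧ H.Adj b c ∧ H.Adj c d ∧ H.Adj d a))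
  (hmindeg : ∀ v, k ^ 2 ≤ H.degree v)
  (hadj1 : ∀ u v : V, G.Adj (Sum.inl u) (Sum.inl v) ↔ H.Adj u v)
  (hadj2 : ∀ (S : {S : Finset V // S ⊆ B ∧ S.card = k}) (u : V),
      G.Adj (Sum.inr S) (Sum.inl u) ↔ u ∈ S.val)
  (hadj3 : ∀ (S T : {S : Finset V // S ⊆ B ∧ S.card = k}), ¬ G.Adj (Sum.inr S) (Sum.inr T))
  (hBcard : k ^ 2 * (k ^ 2 - 1) + 1 ≤ B.card)

include hk in
lemma exists_ne_two (a b : Fin k) : ∃ γ : Fin k, γ ≠ a ∧ γ ≠ b := by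
  classical
  have h1 : ((Finset.univ : Finset (Fin k)) \ {a, b}).Nonempty := by
    rw [← Finset.card_pos, Finset.card_sdiff_of_subset (Finset.subset_univ _)]
    have h2 : ({a, b} : Finset (Fin k)).card ≤ 2 :=
      le_trans (Finset.card_insert_le _ _) (by rw [Finset.card_singleton])
    have h3 : (Finset.univ : Finset (Fin k)).card = k := by simp
    omega
  obtain ⟨γ, hγ⟩ := h1
  rw [Finset.mem_sdiff, Finset.mem_insert, Finset.mem_singleton] at hγ
  exact ⟨γ, fun h => hγ.2 (Or.inl h), fun h => hγ.2 (Or.inr h)⟩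

include hk hBcard in
lemma small_uncolored {c : (V ⊕ {S : Finset V // S ⊆ B ∧ S.card = k}) → Option (Fin k)}
    (hcnt : cnt B c ≤ 6) : ∃ w, c w = none := by
  apply exists_uncolored_of_cnt_lt (B := B)
  have h9 : 9 ≤ k ^ 2 := by nlinarith
  have h8 : 8 ≤ k ^ 2 - 1 := by omega
  have h72 : 9 * 8 ≤ k ^ 2 * (k ^ 2 - 1) := Nat.mul_le_mul h9 h8
  omega

include hk hC4free hmindeg hadj1 hadj2 in
/-- The key counting lemma for the opening: if at most `5` vertices are colored,
`x` is colored, and every colored `v_T` has a colored member, then `x` has an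
uncolored `H`-neighbor whose only possibly-colored `G`-neighbor is `x`. -/
lemma exists_good_nbr {c : (V ⊕ {S : Finset V // S ⊆ B ∧ S.card = k}) → Option (Fin k)}
    {x : V} (hx : (c (Sum.inl x)).isSome)
    (hT : ∀ T : {S : Finset V // S ⊆ B ∧ S.card = k}, (c (Sum.inr T)).isSome →
      ∃ t ∈ T.val, (c (Sum.inl t)).isSome)
    (hcnt : cnt B c ≤ 5) :
    ∃ b₁, H.Adj x b₁ ∧ c (Sum.inl b₁) = none ∧
      ∀ u, G.Adj (Sum.inl b₁) u → u = Sum.inl x ∨ c u = none := by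
  classical
  set CO := (Finset.univ : Finset (V ⊕ {S : Finset V // S ⊆ B ∧ S.card = k})).filter
    (fun y => (c y).isSome ∧ y ≠ Sum.inl x) with hCOdef
  have hCOcard : CO.card ≤ 4 := by
    have hsub : insert (Sum.inl x) CO ⊆
        (Finset.univ.filter fun w => (c w).isSome) := by
      intro y hy
      rcases Finset.mem_insert.1 hy with rfl | hy
      · exact Finset.mem_filter.2 ⟨Finset.mem_univ _, hx⟩
      · exact Finset.mem_filter.2 ⟨Finset.mem_univ _, (Finset.mem_filter.1 hy).2.1⟩
    have hnm : Sum.inl x ∉ CO := fun h => (Finset.mem_filter.1 h).2.2 rfl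
    have := Finset.card_le_card hsub
    rw [Finset.card_insert_of_notMem hnm] at this
    unfold cnt at hcnt
    omega
  set E : (V ⊕ {S : Finset V // S ⊆ B ∧ S.card = k}) → Finset V := fun y =>
    Sum.rec (fun u => insert u (H.neighborFinset u ∩ H.neighborFinset x))
      (fun T => T.val.filter (fun t => c (Sum.inl t) = none)) y with hEdef
  have hE : ∀ y ∈ CO, (E y).card ≤ k - 1 := by
    intro y hy
    obtain ⟨-, hysome, hyne⟩ := Finset.mem_filter.1 hy
    rcases y with u | T
    · have hune : u ≠ x := fun h => hyne (h ▸ rfl)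
      have h1 := common_nbr_le_one hC4free hune
      have h2 := Finset.card_insert_le u (H.neighborFinset u ∩ H.neighborFinset x)
      simp only [hEdef]
      omega
    · obtain ⟨t, htT, htcol⟩ := hT T hysome
      have hsub : T.val.filter (fun t => c (Sum.inl t) = none) ⊆ T.val.erase t := by
        intro s hs
        obtain ⟨hsT, hsnone⟩ := Finset.mem_filter.1 hs
        refine Finset.mem_erase.2 ⟨?_, hsT⟩
        intro hst
        rw [← hst] at htcol
        rw [hsnone] at htcol
        simp at htcol
      have h1 := Finset.card_le_card hsub
      have h2 := Finset.card_erase_le (s := T.val) (a := t)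
      have h3 : (T.val.erase t).card = T.val.card - 1 :=
        Finset.card_erase_of_mem htT
      have h4 : T.val.card = k := T.2.2
      simp only [hEdef]
      omega
  set bad := (H.neighborFinset x).filter (fun b => ¬(c (Sum.inl b) = none ∧
    ∀ u, G.Adj (Sum.inl b) u → u = Sum.inl x ∨ c u = none)) with hbaddef
  have hcover : bad ⊆ CO.biUnion E := by
    intro b hb
    obtain ⟨hbN, hbbad⟩ := Finset.mem_filter.1 hb
    rw [SimpleGraph.mem_neighborFinset] at hbN
    by_cases hcb : c (Sum.inl b) = none
    · have hbad2 : ∃ u, G.Adj (Sum.inl b) u ∧ u ≠ Sum.inl x ∧ (c u).isSome := by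
        by_contra hno
        push_neg at hno
        apply hbbad
        refine ⟨hcb, fun u hu => ?_⟩
        by_cases hux : u = Sum.inl x
        · exact Or.inl hux
        · right
          rcases hcu : c u with _ | a
          · rfl
          · exact absurd (by rw [hcu]; rfl) (hno u hu hux)
      obtain ⟨u, hu, hune, husome⟩ := hbad2
      rcases u with u' | T
      · refine Finset.mem_biUnion.2 ⟨Sum.inl u', ?_, ?_⟩
        · exact Finset.mem_filter.2 ⟨Finset.mem_univ _, husome, hune⟩
        · simp only [hEdef]
          refine Finset.mem_insert_of_mem (Finset.mem_inter.2 ⟨?_, ?_⟩)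
          · rw [SimpleGraph.mem_neighborFinset]
            exact ((hadj1 b u').1 hu).symm
          · rw [SimpleGraph.mem_neighborFinset]
            exact hbN
      · refine Finset.mem_biUnion.2 ⟨Sum.inr T, ?_, ?_⟩
        · exact Finset.mem_filter.2 ⟨Finset.mem_univ _, husome, by simp⟩
        · simp only [hEdef]
          exact Finset.mem_filter.2 ⟨(hadj2 T b).1 (G.adj_symm hu), hcb⟩
    · refine Finset.mem_biUnion.2 ⟨Sum.inl b, ?_, ?_⟩
      · refine Finset.mem_filter.2 ⟨Finset.mem_univ _, ?_, ?_⟩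
        · rcases hcb2 : c (Sum.inl b) with _ | a
          · exact absurd hcb2 hcb
          · rfl
        · intro h
          have : b = x := by injection h
          exact H.irrefl (this ▸ hbN)
      · simp only [hEdef]
        exact Finset.mem_insert_self _ _
  have hbadcard : bad.card ≤ 4 * (k - 1) := by
    calc bad.card ≤ (CO.biUnion E).card := Finset.card_le_card hcover
      _ ≤ ∑ y ∈ CO, (E y).card := Finset.card_biUnion_le
      _ ≤ ∑ _y ∈ CO, (k - 1) := Finset.sum_le_sum hE
      _ = CO.card * (k - 1) := by rw [Finset.sum_const, smul_eq_mul]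
      _ ≤ 4 * (k - 1) := Nat.mul_le_mul_right _ hCOcard
  have hpool : k ^ 2 ≤ (H.neighborFinset x).card := hmindeg x
  have hlt : 4 * (k - 1) < k ^ 2 := by nlinarith [Nat.sub_le k 1, Nat.sub_add_cancel (by omega : 1 ≤ k)]
  have hne : ((H.neighborFinset x) \ bad).Nonempty := by
    rw [← Finset.card_pos]
    have hsubbad : bad ⊆ H.neighborFinset x := by
      rw [hbaddef]
      exact Finset.filter_subset _ _
    have := Finset.card_sdiff_of_subset hsubbad
    omega
  obtain ⟨b₁, hb₁⟩ := hne
  obtain ⟨hb₁N, hb₁nb⟩ := Finset.mem_sdiff.1 hb₁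
  have hgood : c (Sum.inl b₁) = none ∧
      ∀ u, G.Adj (Sum.inl b₁) u → u = Sum.inl x ∨ c u = none := by
    by_contra hh
    exact hb₁nb (Finset.mem_filter.2 ⟨hb₁N, hh⟩)
  rw [SimpleGraph.mem_neighborFinset] at hb₁N
  exact ⟨b₁, hb₁N, hgood.1, hgood.2⟩

variable (B) in
/-- Every colored `v_T` has a colored member. -/
def TInv (c : (V ⊕ {S : Finset V // S ⊆ B ∧ S.card = k}) → Option (Fin k)) : Prop :=
  ∀ T : {S : Finset V // S ⊆ B ∧ S.card = k}, (c (Sum.inr T)).isSome →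
    ∃ t ∈ T.val, (c (Sum.inl t)).isSome

lemma isSome_mono {c : (V ⊕ {S : Finset V // S ⊆ B ∧ S.card = k}) → Option (Fin k)}
    {v u} {a : Fin k} (hv : c v = none) (h : (c u).isSome) : ((play c v a) u).isSome := by
  rcases hcu : c u with _ | i
  · rw [hcu] at h
    simp at h
  · rw [mono_play hv hcu]
    rfl

lemma tinv_play_inl {c : (V ⊕ {S : Finset V // S ⊆ B ∧ S.card = k}) → Option (Fin k)}
    {z : V} {a : Fin k} (hz : c (Sum.inl z) = none) (h : TInv B c) :
    TInv B (play c (Sum.inl z) a) := by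
  intro T hT
  have hT' : (c (Sum.inr T)).isSome := by
    unfold play at hT
    rwa [Function.update_of_ne (by simp)] at hT
  obtain ⟨t, htT, htc⟩ := h T hT'
  exact ⟨t, htT, isSome_mono hz htc⟩

include hadj2 hadj3 in
lemma tinv_play_inr {c : (V ⊕ {S : Finset V // S ⊆ B ∧ S.card = k}) → Option (Fin k)}
    {T₁ : {S : Finset V // S ⊆ B ∧ S.card = k}} {a : Fin k}
    (hleg : LegalMove true G c (Sum.inr T₁) a) (hsome : ∃ w, (c w).isSome)
    (h : TInv B c) : TInv B (play c (Sum.inr T₁) a) := by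
  intro T hT
  by_cases hTT : T = T₁
  · subst hTT
    rcases hleg.2 rfl with hall | ⟨u, hu, husome⟩
    · obtain ⟨w, hw⟩ := hsome
      rw [hall w] at hw
      simp at hw
    · rcases u with t | T₂
      · exact ⟨t, (hadj2 T t).1 hu, isSome_mono hleg.1.1 husome⟩
      · exact absurd hu (hadj3 _ _)
  · have hT' : (c (Sum.inr T)).isSome := by
      unfold play at hT
      rwa [Function.update_of_ne (by simp [hTT])] at hT
    obtain ⟨t, htT, htc⟩ := h T hT'
    exact ⟨t, htT, isSome_mono hleg.1.1 htc⟩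

include hk hdisj hbip hC4free hmindeg hadj1 hadj2 hadj3 hBcard in
/-- Bob's final setup move: with a colored vertex `x ∈ A` and a colored `q ∈ B`,
Bob colors a clean neighbor of `x` with a color avoiding both existing colors,
creating two distinct-colored anchors in `B`. -/
lemma setup2 {c : (V ⊕ {S : Finset V // S ⊆ B ∧ S.card = k}) → Option (Fin k)}
    {x q : V} {α βq : Fin k}
    (hxA : x ∈ A) (hxc : c (Sum.inl x) = some α)
    (hqB : q ∈ B) (hqc : c (Sum.inl q) = some βq)
    (hPI : PInv G k c) (hTI : TInv B c) (hcnt : cnt B c ≤ 5) :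
    ∀ n, BobWinsFrom true G k n false c := by
  intro n
  obtain ⟨b₁, hb₁adj, hb₁unc, hb₁good⟩ := exists_good_nbr hk hadj2 hC4free hmindeg hadj1
    (x := x) (by rw [hxc]; rfl) hTI hcnt
  obtain ⟨δ, hδα, hδβ⟩ := exists_ne_two hk α βq
  have hb₁B : b₁ ∈ B := mem_B_of_adj_of_mem_A hdisj hbip hxA hb₁adj
  have hleg : LegalMove true G c (Sum.inl b₁) δ := by
    refine ⟨⟨hb₁unc, ?_⟩, fun _ =>
      Or.inr ⟨Sum.inl x, (hadj1 b₁ x).2 hb₁adj.symm, by rw [hxc]; rfl⟩⟩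
    intro u hu
    rcases hb₁good u hu with rfl | hnone
    · rw [hxc]
      intro hh
      exact hδα (by injection hh with h; exact h.symm)
    · rw [hnone]
      simp
  cases n with
  | zero => exact small_uncolored hk hBcard (by omega)
  | succ n =>
    refine ⟨small_uncolored hk hBcard (by omega), ?_⟩
    simp only [if_neg (by simp : ¬ (false = true))]
    refine Or.inr ⟨Sum.inl b₁, δ, hleg, ?_⟩
    apply (master hk hadj2 hadj3 hBcard n).2
    left
    have hb₁self : (play c (Sum.inl b₁) δ) (Sum.inl b₁) = some δ := by
      unfold play
      rw [Function.update_self]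
    refine ⟨0, q, b₁, ⟨pinv_play hleg.1 hPI, hqB, hb₁B,
      ⟨βq, δ, mono_play hb₁unc hqc, hb₁self, fun hh => hδβ hh.symm⟩, ?_⟩, ?_⟩
    · have hsub : ({βq, δ} : Finset (Fin k)) ⊆ BC B (play c (Sum.inl b₁) δ) := by
        intro i hi
        rcases Finset.mem_insert.1 hi with rfl | hi
        · simp only [BC, Finset.mem_filter, Finset.mem_univ, true_and]
          exact ⟨q, hqB, mono_play hb₁unc hqc⟩
        · rw [Finset.mem_singleton] at hi
          subst hi
          simp only [BC, Finset.mem_filter, Finset.mem_univ, true_and]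
          exact ⟨b₁, hb₁B, hb₁self⟩
      have hc2 : ({βq, δ} : Finset (Fin k)).card = 2 := by
        rw [Finset.card_insert_of_notMem (by
          rw [Finset.mem_singleton]
          exact fun hh => hδβ hh.symm), Finset.card_singleton]
      have := Finset.card_le_card hsub
      omega
    · have := cnt_play_le (B := B) (c := c)
        (v := (Sum.inl b₁ : V ⊕ {S : Finset V // S ⊆ B ∧ S.card = k})) (a := δ)
      omega

include hk hdisj hbip hC4free hmindeg hadj1 hadj2 hadj3 hBcard in
/-- The Alice move before Bob's final setup move. -/
lemma setup1 {c : (V ⊕ {S : Finset V // S ⊆ B ∧ S.card = k}) → Option (Fin k)}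
    {x q : V} {α βq : Fin k}
    (hxA : x ∈ A) (hxc : c (Sum.inl x) = some α)
    (hqB : q ∈ B) (hqc : c (Sum.inl q) = some βq)
    (hPI : PInv G k c) (hTI : TInv B c) (hcnt : cnt B c ≤ 4) :
    ∀ n, BobWinsFrom true G k n true c := by
  intro n
  cases n with
  | zero => exact small_uncolored hk hBcard (by omega)
  | succ n =>
    refine ⟨small_uncolored hk hBcard (by omega), ?_⟩
    simp only [if_pos rfl]
    intro w δ hleg
    have hcnt' := cnt_play_le (B := B) (c := c) (v := w) (a := δ)
    have hTI' : TInv B (play c w δ) := by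
      rcases w with z | T
      · exact tinv_play_inl hleg.1.1 hTI
      · exact tinv_play_inr hadj2 hadj3 hleg ⟨Sum.inl x, by rw [hxc]; rfl⟩ hTI
    exact setup2 hk hadj2 hadj3 hBcard hdisj hbip hC4free hmindeg hadj1
      hxA (mono_play hleg.1.1 hxc) hqB (mono_play hleg.1.1 hqc)
      (pinv_play hleg.1 hPI) hTI' (by omega) n

include hk hdisj hbip hC4free hmindeg hadj1 hadj2 hadj3 hBcard in
/-- Bob's hook move: given a colored `B`-vertex, color a clean `A`-neighbor of it. -/
lemma setup_hook {c : (V ⊕ {S : Finset V // S ⊆ B ∧ S.card = k}) → Option (Fin k)}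
    {v : V} {β : Fin k}
    (hvB : v ∈ B) (hvc : c (Sum.inl v) = some β)
    (hPI : PInv G k c) (hTI : TInv B c) (hcnt : cnt B c ≤ 3) :
    ∀ n, BobWinsFrom true G k n false c := by
  intro n
  obtain ⟨a, haadj, haunc, hagood⟩ := exists_good_nbr hk hadj2 hC4free hmindeg hadj1
    (x := v) (by rw [hvc]; rfl) hTI (by omega)
  obtain ⟨α, hαβ⟩ := exists_ne_color hk β
  have haA : a ∈ A := mem_A_of_adj_of_mem_B hdisj hbip hvB haadj
  have hleg : LegalMove true G c (Sum.inl a) α := by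
    refine ⟨⟨haunc, ?_⟩, fun _ =>
      Or.inr ⟨Sum.inl v, (hadj1 a v).2 haadj.symm, by rw [hvc]; rfl⟩⟩
    intro u hu
    rcases hagood u hu with rfl | hnone
    · rw [hvc]
      intro hh
      exact hαβ (by injection hh with h; exact h.symm)
    · rw [hnone]
      simp
  cases n with
  | zero => exact small_uncolored hk hBcard (by omega)
  | succ n =>
    refine ⟨small_uncolored hk hBcard (by omega), ?_⟩
    simp only [if_neg (by simp : ¬ (false = true))]
    refine Or.inr ⟨Sum.inl a, α, hleg, ?_⟩
    have haself : (play c (Sum.inl a) α) (Sum.inl a) = some α := by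
      unfold play
      rw [Function.update_self]
    exact setup1 hk hadj2 hadj3 hBcard hdisj hbip hC4free hmindeg hadj1
      haA haself hvB (mono_play haunc hvc)
      (pinv_play hleg.1 hPI) (tinv_play_inl haunc hTI)
      (le_trans (cnt_play_le (B := B)) (by omega)) n

include hk hadj2 hadj3 hBcard hdisj hbip hC4free hmindeg hadj1 in
/-- Case: Alice's first move is a vertex of `A`. -/
lemma setup_caseA {c : (V ⊕ {S : Finset V // S ⊆ B ∧ S.card = k}) → Option (Fin k)}
    {v : V} {α : Fin k}
    (hvA : v ∈ A) (hvc : c (Sum.inl v) = some α)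
    (hPI : PInv G k c) (hTI : TInv B c) (hcnt : cnt B c ≤ 1) :
    ∀ n, BobWinsFrom true G k n false c := by
  intro n
  obtain ⟨b₀, hb₀adj, hb₀unc, hb₀good⟩ := exists_good_nbr hk hadj2 hC4free hmindeg hadj1
    (x := v) (by rw [hvc]; rfl) hTI (by omega)
  obtain ⟨β, hβα⟩ := exists_ne_color hk α
  have hb₀B : b₀ ∈ B := mem_B_of_adj_of_mem_A hdisj hbip hvA hb₀adj
  have hleg : LegalMove true G c (Sum.inl b₀) β := by
    refine ⟨⟨hb₀unc, ?_⟩, fun _ =>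
      Or.inr ⟨Sum.inl v, (hadj1 b₀ v).2 hb₀adj.symm, by rw [hvc]; rfl⟩⟩
    intro u hu
    rcases hb₀good u hu with rfl | hnone
    · rw [hvc]
      intro hh
      exact hβα (by injection hh with h; exact h.symm)
    · rw [hnone]
      simp
  cases n with
  | zero => exact small_uncolored hk hBcard (by omega)
  | succ n =>
    refine ⟨small_uncolored hk hBcard (by omega), ?_⟩
    simp only [if_neg (by simp : ¬ (false = true))]
    refine Or.inr ⟨Sum.inl b₀, β, hleg, ?_⟩
    have hself : (play c (Sum.inl b₀) β) (Sum.inl b₀) = some β := by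
      unfold play
      rw [Function.update_self]
    exact setup1 hk hadj2 hadj3 hBcard hdisj hbip hC4free hmindeg hadj1
      hvA (mono_play hb₀unc hvc) hb₀B hself
      (pinv_play hleg.1 hPI) (tinv_play_inl hb₀unc hTI)
      (le_trans (cnt_play_le (B := B)) (by omega)) n

include hk hadj2 hadj3 hBcard hdisj hbip hC4free hmindeg hadj1 in
/-- The Alice ply before Bob's hook move. -/
lemma pre_hook {c : (V ⊕ {S : Finset V // S ⊆ B ∧ S.card = k}) → Option (Fin k)}
    {v : V} {β : Fin k}
    (hvB : v ∈ B) (hvc : c (Sum.inl v) = some β)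
    (hPI : PInv G k c) (hTI : TInv B c) (hcnt : cnt B c ≤ 2) :
    ∀ n, BobWinsFrom true G k n true c := by
  intro n
  cases n with
  | zero => exact small_uncolored hk hBcard (by omega)
  | succ n =>
    refine ⟨small_uncolored hk hBcard (by omega), ?_⟩
    simp only [if_pos rfl]
    intro w δ hleg
    have hTI' : TInv B (play c w δ) := by
      rcases w with z | T
      · exact tinv_play_inl hleg.1.1 hTI
      · exact tinv_play_inr hadj2 hadj3 hleg ⟨Sum.inl v, by rw [hvc]; rfl⟩ hTI
    exact setup_hook hk hadj2 hadj3 hBcard hdisj hbip hC4free hmindeg hadj1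
      hvB (mono_play hleg.1.1 hvc) (pinv_play hleg.1 hPI) hTI'
      (le_trans (cnt_play_le (B := B)) (by omega)) n

include hk hadj2 hadj3 hBcard hdisj hbip hC4free hmindeg hadj1 in
/-- Case: Alice's first move is a subset vertex `v_{T₀}`. -/
lemma setup_caseC {c : (V ⊕ {S : Finset V // S ⊆ B ∧ S.card = k}) → Option (Fin k)}
    {T₀ : {S : Finset V // S ⊆ B ∧ S.card = k}} {τ : Fin k}
    (hc : c (Sum.inr T₀) = some τ)
    (honly : ∀ w, w ≠ Sum.inr T₀ → c w = none)
    (hPI : PInv G k c) (hcnt : cnt B c ≤ 1) :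
    ∀ n, BobWinsFrom true G k n false c := by
  intro n
  obtain ⟨b₀, hb₀mem⟩ := Finset.card_pos.1 (by rw [T₀.2.2]; omega : 0 < T₀.val.card)
  obtain ⟨β, hβτ⟩ := exists_ne_color hk τ
  have hb₀unc : c (Sum.inl b₀) = none := honly _ (by simp)
  have hb₀B : b₀ ∈ B := T₀.2.1 hb₀mem
  have hleg : LegalMove true G c (Sum.inl b₀) β := by
    refine ⟨⟨hb₀unc, ?_⟩, fun _ =>
      Or.inr ⟨Sum.inr T₀, G.adj_symm ((hadj2 T₀ b₀).2 hb₀mem), by rw [hc]; rfl⟩⟩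
    intro u hu
    by_cases huT : u = Sum.inr T₀
    · subst huT
      rw [hc]
      intro hh
      exact hβτ (by injection hh with h; exact h.symm)
    · rw [honly u huT]
      simp
  cases n with
  | zero => exact small_uncolored hk hBcard (by omega)
  | succ n =>
    refine ⟨small_uncolored hk hBcard (by omega), ?_⟩
    simp only [if_neg (by simp : ¬ (false = true))]
    refine Or.inr ⟨Sum.inl b₀, β, hleg, ?_⟩
    have hself : (play c (Sum.inl b₀) β) (Sum.inl b₀) = some β := by
      unfold play
      rw [Function.update_self]
    have hTI' : TInv B (play c (Sum.inl b₀) β) := by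
      intro T hT
      by_cases hTT : T = T₀
      · subst hTT
        exact ⟨b₀, hb₀mem, by rw [hself]; rfl⟩
      · exfalso
        unfold play at hT
        rw [Function.update_of_ne (by simp), honly (Sum.inr T) (by simp [hTT])] at hT
        simp at hT
    exact pre_hook hk hadj2 hadj3 hBcard hdisj hbip hC4free hmindeg hadj1
      hb₀B hself (pinv_play hleg.1 hPI) hTI'
      (le_trans (cnt_play_le (B := B)) (by omega)) n

include hk hadj2 hadj3 hBcard hdisj hbip hC4free hmindeg hadj1 in
/-- Bob wins from the initial position. -/
lemma opening (hcover : ∀ v, v ∈ A ∨ v ∈ B)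
    (hne : Nonempty (V ⊕ {S : Finset V // S ⊆ B ∧ S.card = k})) :
    ∀ n, BobWinsFrom true G k n true
      (fun _ => (none : Option (Fin k))) := by
  obtain ⟨w₀⟩ := hne
  have hPI0 : PInv G k (fun _ => (none : Option (Fin k))) := by
    intro u v a _ h
    simp at h
  have hcnt0 : cnt B (fun _ => (none : Option (Fin k))) = 0 := by
    unfold cnt
    simp
  intro n
  cases n with
  | zero => exact ⟨w₀, rfl⟩
  | succ n =>
    refine ⟨⟨w₀, rfl⟩, ?_⟩
    simp only [if_pos rfl]
    intro w δ hleg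
    have hcnt1 : cnt B (play (fun _ => (none : Option (Fin k))) w δ) ≤ 1 :=
      le_trans (cnt_play_le (B := B)) (by omega)
    have hself : (play (fun _ => (none : Option (Fin k))) w δ) w = some δ := by
      unfold play
      rw [Function.update_self]
    have hPI' := pinv_play hleg.1 hPI0
    rcases w with z | T₀
    · have hTI' : TInv B (play (fun _ => (none : Option (Fin k))) (Sum.inl z) δ) := by
        intro T hT
        exfalso
        unfold play at hT
        rw [Function.update_of_ne (by simp)] at hT
        simp at hT
      rcases hcover z with hz | hz
      · exact setup_caseA hk hadj2 hadj3 hBcard hdisj hbip hC4free hmindeg hadj1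
          hz hself hPI' hTI' hcnt1 n
      · exact setup_hook hk hadj2 hadj3 hBcard hdisj hbip hC4free hmindeg hadj1
          hz hself hPI' hTI' (by omega) n
    · exact setup_caseC hk hadj2 hadj3 hBcard hdisj hbip hC4free hmindeg hadj1
        hself (fun w' hw' => by unfold play; rw [Function.update_of_ne hw']) hPI' hcnt1 n

end Setup

end Master

end Strategy

/-- Let `k ≥ 3`, let `H` be a finite bipartite simple graph with partite
sets `A` and `B`, with no 4-cycle and minimum degree at least `k²`, and let `G` be the
connected graph obtained from `H` by adding, for each `k`-element subset `S` of `B`,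
a new vertex `v_S` adjacent exactly to the vertices of `S`.  Then Bob has a winning
strategy in the connected coloring game on `G` with `k` colors. -/
theorem bobWins_on_bipartite_construction {V : Type*} [Fintype V] [DecidableEq V]
    (k : ℕ) (hk : 3 ≤ k) (H : SimpleGraph V) (A B : Finset V)
    (hcover : ∀ v, v ∈ A ∨ v ∈ B) (hdisj : Disjoint A B)
    (hbip : ∀ u v, H.Adj u v → (u ∈ A ∧ v ∈ B) ∨ (u ∈ B ∧ v ∈ A))
    (hC4free : ∀ a b c d : V, a ≠ b → a ≠ c → a ≠ d → b ≠ c → b ≠ d → c ≠ d →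
      ¬(H.Adj a b ∧ H.Adj b c ∧ H.Adj c d ∧ H.Adj d a))
    (hmindeg : ∀ v, k ^ 2 ≤ H.degree v)
    (G : SimpleGraph (V ⊕ {S : Finset V // S ⊆ B ∧ S.card = k}))
    (hG : ∀ x y, G.Adj x y ↔
      (match x, y with
        | Sum.inl u, Sum.inl v => H.Adj u v
        | Sum.inl u, Sum.inr S => u ∈ S.val
        | Sum.inr S, Sum.inl u => u ∈ S.val
        | Sum.inr _, Sum.inr _ => False))
    (hconn : G.Connected) :
    ConnGame.BobWinsColoringGame true G k := by
  classical
  have hadj1 : ∀ u v : V, G.Adj (Sum.inl u) (Sum.inl v) ↔ H.Adj u v := fun u v => hG _ _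
  have hadj2 : ∀ (S : {S : Finset V // S ⊆ B ∧ S.card = k}) (u : V),
      G.Adj (Sum.inr S) (Sum.inl u) ↔ u ∈ S.val := fun S u => hG _ _
  have hadj3 : ∀ (S T : {S : Finset V // S ⊆ B ∧ S.card = k}),
      ¬ G.Adj (Sum.inr S) (Sum.inr T) := fun S T h => (hG _ _).1 h
  have hne : Nonempty (V ⊕ {S : Finset V // S ⊆ B ∧ S.card = k}) := hconn.nonempty
  have hB : B.Nonempty := by
    obtain ⟨w⟩ := hne
    rcases w with v | S
    · rcases hcover v with hv | hv
      · have hd := deg_pos hk hmindeg v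
        obtain ⟨u, hu⟩ := Finset.card_pos.1 hd
        rw [SimpleGraph.mem_neighborFinset] at hu
        exact ⟨u, mem_B_of_adj_of_mem_A hdisj hbip hv hu⟩
      · exact ⟨v, hv⟩
    · obtain ⟨t, ht⟩ := Finset.card_pos.1 (by rw [S.2.2]; omega : 0 < S.val.card)
      exact ⟨t, S.2.1 ht⟩
  have hBcard : k ^ 2 * (k ^ 2 - 1) + 1 ≤ B.card :=
    B_large hk hdisj hbip hC4free hmindeg hB
  unfold ConnGame.BobWinsColoringGame
  exact opening hk hadj2 hadj3 hBcard hdisj hbip hC4free hmindeg hadj1 hcover hne _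
end

section
/- There exists a finite connected outerplanar simple graph G with connected game chromatic number exactly 4, i.e., χ_cg(G) = 4. -/
open scoped Classical

namespace MyProof12
open ConnGame

def mask : Fin 6 → ℕ
  | 0 => 12 | 1 => 48 | 2 => 41 | 3 => 53 | 4 => 42 | 5 => 30

lemma maskSymm : ∀ v u : Fin 6, Nat.testBit (mask v) u.val = true →
    Nat.testBit (mask u) v.val = true := by decide

lemma maskIrrefl : ∀ v : Fin 6, ¬ Nat.testBit (mask v) v.val = true := by decide

def G6 : SimpleGraph (Fin 6) where
  Adj v u := Nat.testBit (mask v) u.val = true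
  symm := ⟨fun v u h => maskSymm v u h⟩
  loopless := ⟨fun v h => maskIrrefl v h⟩

instance : DecidableRel G6.Adj :=
  fun v u => inferInstanceAs (Decidable (Nat.testBit (mask v) u.val = true))

instance (priority := 2000) fastForallFin {n : ℕ} (P : Fin n → Prop) [DecidablePred P] :
    Decidable (∀ i, P i) := Nat.decidableForallFin P

instance (priority := 2000) fastExistsFin {n : ℕ} (P : Fin n → Prop) [DecidablePred P] :
    Decidable (∃ i, P i) := decidable_of_iff (¬ ∀ i, ¬ P i) not_forall_not

section Dec
variable {V : Type*} [Fintype V] [DecidableEq V]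

instance ProperMove.dec (G : SimpleGraph V) [DecidableRel G.Adj] {k : ℕ}
    (c : V → Option (Fin k)) (v : V) (a : Fin k) : Decidable (ProperMove G c v a) := by
  unfold ProperMove; infer_instance

instance ConnMove.dec (G : SimpleGraph V) [DecidableRel G.Adj] {k : ℕ}
    (c : V → Option (Fin k)) (v : V) : Decidable (ConnMove G c v) := by
  unfold ConnMove; infer_instance

instance LegalMove.dec (conn : Bool) (G : SimpleGraph V) [DecidableRel G.Adj] {k : ℕ}
    (c : V → Option (Fin k)) (v : V) (a : Fin k) : Decidable (LegalMove conn G c v a) := by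
  unfold LegalMove; infer_instance

instance AliceWinsFrom.dec (conn : Bool) (G : SimpleGraph V) [DecidableRel G.Adj] (k : ℕ) :
    ∀ (n : ℕ) (b : Bool) (c : V → Option (Fin k)), Decidable (AliceWinsFrom conn G k n b c)
  | 0, _, c => by unfold AliceWinsFrom; infer_instance
  | n + 1, b, c => by
    haveI : ∀ b' c', Decidable (AliceWinsFrom conn G k n b' c') := AliceWinsFrom.dec conn G k n
    unfold AliceWinsFrom; infer_instance

instance AliceWinsColoringGame.dec (conn : Bool) (G : SimpleGraph V) [DecidableRel G.Adj]
    (k : ℕ) : Decidable (AliceWinsColoringGame conn G k) := by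
  unfold AliceWinsColoringGame; infer_instance

end Dec

set_option maxRecDepth 100000 in
set_option maxHeartbeats 8000000 in
lemma h4 : AliceWinsColoringGame true G6 4 := by decide +kernel

set_option maxRecDepth 100000 in
set_option maxHeartbeats 8000000 in
lemma h0 : ¬ AliceWinsColoringGame true G6 0 := by decide +kernel

set_option maxRecDepth 100000 in
set_option maxHeartbeats 8000000 in
lemma h1 : ¬ AliceWinsColoringGame true G6 1 := by decide +kernel

set_option maxRecDepth 100000 in
set_option maxHeartbeats 8000000 in
lemma h2 : ¬ AliceWinsColoringGame true G6 2 := by decide +kernel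

set_option maxRecDepth 100000 in
set_option maxHeartbeats 8000000 in
lemma h3 : ¬ AliceWinsColoringGame true G6 3 := by decide +kernel

lemma G6conn : G6.Connected := by
  rw [SimpleGraph.connected_iff]
  refine ⟨?_, ⟨0⟩⟩
  have r : ∀ w : Fin 6, G6.Reachable 5 w := by
    intro w
    have key : ∀ w : Fin 6, G6.Adj 5 w ∨ w = 5 ∨ w = 0 := by decide
    rcases key w with h | h | h
    · exact h.reachable
    · rw [h]
    · rw [h]
      exact ((by decide : G6.Adj 5 2).reachable).trans (by decide : G6.Adj 2 0).reachable
  intro u v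
  exact (r u).symm.trans (r v)

lemma walk_head {V' : Type*} {G' : SimpleGraph V'} {a b : V'} (p : G'.Walk a b) (h : a ≠ b) :
    ∃ x, G'.Adj a x := by
  cases p with
  | nil => exact absurd rfl h
  | cons h' _ => exact ⟨_, h'⟩

lemma minor_finset {W : Type*} {V : Type*} [Fintype V] [DecidableEq V] {H : SimpleGraph W}
    {G : SimpleGraph V} (h : IsMinorOf H G) :
    ∃ g : W → Finset V,
      (∀ w, (g w).Nonempty ∧ ∀ v ∈ g w, ∀ u ∈ g w, u ≠ v → ∃ x ∈ g w, G.Adj v x) ∧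
      (∀ w w', w ≠ w' → (g w) ∩ (g w') = ∅) ∧
      (∀ w w', H.Adj w w' → ∃ u ∈ g w, ∃ v ∈ g w', G.Adj u v) := by
  obtain ⟨f, hne, hconn, hdisj, hadj⟩ := h
  refine ⟨fun w => (Set.toFinite (f w)).toFinset, ?_, ?_, ?_⟩
  · intro w
    constructor
    · obtain ⟨x, hx⟩ := hne w
      exact ⟨x, (Set.Finite.mem_toFinset _).2 hx⟩
    · intro v hv u hu hne'
      rw [Set.Finite.mem_toFinset] at hv hu
      obtain ⟨p⟩ := (hconn w).preconnected ⟨v, hv⟩ ⟨u, hu⟩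
      obtain ⟨x, hx⟩ := walk_head p (by simp [Subtype.ext_iff]; exact fun e => hne' e.symm)
      exact ⟨x.1, (Set.Finite.mem_toFinset _).2 x.2, hx⟩
  · intro w w' hww'
    rw [← Finset.disjoint_iff_inter_eq_empty, Set.Finite.disjoint_toFinset]
    exact hdisj w w' hww'
  · intro w w' ha
    obtain ⟨u, hu, v, hv, huv⟩ := hadj w w' ha
    exact ⟨u, (Set.Finite.mem_toFinset _).2 hu, v, (Set.Finite.mem_toFinset _).2 hv, huv⟩

/-- necessary conditions on a branch set: nonempty, and if it has two distinct
elements then every element has a neighbor inside the set. -/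
def OKs (s : Finset (Fin 6)) : Prop :=
  s.Nonempty ∧ ∀ v ∈ s, ∀ u ∈ s, u ≠ v → ∃ x ∈ s, G6.Adj v x

def AdjS (s t : Finset (Fin 6)) : Prop := ∃ u ∈ s, ∃ v ∈ t, G6.Adj u v

instance (s : Finset (Fin 6)) : Decidable (OKs s) := by unfold OKs; infer_instance
instance (s t : Finset (Fin 6)) : Decidable (AdjS s t) := by unfold AdjS; infer_instance

set_option maxRecDepth 100000 in
set_option maxHeartbeats 8000000 in
lemma noK4decide : ¬ ∃ s0 : Finset (Fin 6), (s0.card ≤ 3 ∧ OKs s0) ∧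
    ∃ s1, (s0 ∩ s1 = ∅ ∧ s0.card + s1.card ≤ 4 ∧ AdjS s0 s1 ∧ OKs s1) ∧
    ∃ s2, (s0 ∩ s2 = ∅ ∧ s1 ∩ s2 = ∅ ∧ s0.card + s1.card + s2.card ≤ 5 ∧
      AdjS s0 s2 ∧ AdjS s1 s2 ∧ OKs s2) ∧
    ∃ s3, s0 ∩ s3 = ∅ ∧ s1 ∩ s3 = ∅ ∧ s2 ∩ s3 = ∅ ∧
      AdjS s0 s3 ∧ AdjS s1 s3 ∧ AdjS s2 s3 ∧ OKs s3 := by decide +kernel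

set_option maxRecDepth 100000 in
set_option maxHeartbeats 8000000 in
lemma noK23decide : ¬ ∃ a0 : Finset (Fin 6), (a0.card ≤ 2 ∧ OKs a0) ∧
    ∃ a1, (a0 ∩ a1 = ∅ ∧ a0.card + a1.card ≤ 3 ∧ OKs a1) ∧
    ∃ b0, (a0 ∩ b0 = ∅ ∧ a1 ∩ b0 = ∅ ∧ a0.card + a1.card + b0.card ≤ 4 ∧ OKs b0 ∧
      AdjS a0 b0 ∧ AdjS a1 b0) ∧
    ∃ b1, (a0 ∩ b1 = ∅ ∧ a1 ∩ b1 = ∅ ∧ b0 ∩ b1 = ∅ ∧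
      a0.card + a1.card + b0.card + b1.card ≤ 5 ∧ OKs b1 ∧ AdjS a0 b1 ∧ AdjS a1 b1) ∧
    ∃ b2, a0 ∩ b2 = ∅ ∧ a1 ∩ b2 = ∅ ∧ b0 ∩ b2 = ∅ ∧ b1 ∩ b2 = ∅ ∧
      OKs b2 ∧ AdjS a0 b2 ∧ AdjS a1 b2 := by decide +kernel

lemma card_bound4 {s0 s1 s2 s3 : Finset (Fin 6)} (h01 : s0 ∩ s1 = ∅) (h02 : s0 ∩ s2 = ∅)
    (h03 : s0 ∩ s3 = ∅) (h12 : s1 ∩ s2 = ∅) (h13 : s1 ∩ s3 = ∅) (h23 : s2 ∩ s3 = ∅) :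
    s0.card + s1.card + s2.card + s3.card ≤ 6 := by
  rw [← Finset.disjoint_iff_inter_eq_empty] at h01 h02 h03 h12 h13 h23
  have key : (s0 ∪ s1 ∪ s2 ∪ s3).card ≤ 6 := by
    refine le_trans (Finset.card_le_univ _) ?_
    simp
  rwa [Finset.card_union_of_disjoint
      (Finset.disjoint_union_left.mpr ⟨Finset.disjoint_union_left.mpr ⟨h03, h13⟩, h23⟩),
    Finset.card_union_of_disjoint (Finset.disjoint_union_left.mpr ⟨h02, h12⟩),
    Finset.card_union_of_disjoint h01] at key

lemma card_bound5 {s0 s1 s2 s3 s4 : Finset (Fin 6)} (h01 : s0 ∩ s1 = ∅) (h02 : s0 ∩ s2 = ∅)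
    (h03 : s0 ∩ s3 = ∅) (h04 : s0 ∩ s4 = ∅) (h12 : s1 ∩ s2 = ∅) (h13 : s1 ∩ s3 = ∅)
    (h14 : s1 ∩ s4 = ∅) (h23 : s2 ∩ s3 = ∅) (h24 : s2 ∩ s4 = ∅) (h34 : s3 ∩ s4 = ∅) :
    s0.card + s1.card + s2.card + s3.card + s4.card ≤ 6 := by
  rw [← Finset.disjoint_iff_inter_eq_empty] at h01 h02 h03 h04 h12 h13 h14 h23 h24 h34
  have key : (s0 ∪ s1 ∪ s2 ∪ s3 ∪ s4).card ≤ 6 := by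
    refine le_trans (Finset.card_le_univ _) ?_
    simp
  rwa [Finset.card_union_of_disjoint
      (Finset.disjoint_union_left.mpr ⟨Finset.disjoint_union_left.mpr
        ⟨Finset.disjoint_union_left.mpr ⟨h04, h14⟩, h24⟩, h34⟩),
    Finset.card_union_of_disjoint
      (Finset.disjoint_union_left.mpr ⟨Finset.disjoint_union_left.mpr ⟨h03, h13⟩, h23⟩),
    Finset.card_union_of_disjoint (Finset.disjoint_union_left.mpr ⟨h02, h12⟩),
    Finset.card_union_of_disjoint h01] at key

lemma noK4 : ¬ IsMinorOf (SimpleGraph.completeGraph (Fin 4)) G6 := by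
  intro h
  obtain ⟨g, hok, hdisj, hadj⟩ := minor_finset h
  have cg : ∀ w w' : Fin 4, w ≠ w' → (SimpleGraph.completeGraph (Fin 4)).Adj w w' := fun _ _ h => h
  have d01 := hdisj 0 1 (by decide); have d02 := hdisj 0 2 (by decide)
  have d03 := hdisj 0 3 (by decide); have d12 := hdisj 1 2 (by decide)
  have d13 := hdisj 1 3 (by decide); have d23 := hdisj 2 3 (by decide)
  have hcard := card_bound4 d01 d02 d03 d12 d13 d23
  have c0 := ((hok 0).1).card_pos; have c1 := ((hok 1).1).card_pos
  have c2 := ((hok 2).1).card_pos; have c3 := ((hok 3).1).card_pos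
  refine noK4decide ⟨g 0, ⟨by omega, (hok 0).1, (hok 0).2⟩, g 1,
    ⟨d01, by omega, hadj 0 1 (cg _ _ (by decide)), (hok 1).1, (hok 1).2⟩, g 2,
    ⟨d02, d12, by omega, hadj 0 2 (cg _ _ (by decide)),
      hadj 1 2 (cg _ _ (by decide)), (hok 2).1, (hok 2).2⟩, g 3,
    d03, d13, d23,
    hadj 0 3 (cg _ _ (by decide)), hadj 1 3 (cg _ _ (by decide)),
    hadj 2 3 (cg _ _ (by decide)), (hok 3).1, (hok 3).2⟩

lemma noK23 : ¬ IsMinorOf (completeBipartiteGraph (Fin 2) (Fin 3)) G6 := by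
  intro h
  obtain ⟨g, hok, hdisj, hadj⟩ := minor_finset h
  have cb : ∀ (i : Fin 2) (j : Fin 3),
      (completeBipartiteGraph (Fin 2) (Fin 3)).Adj (Sum.inl i) (Sum.inr j) :=
    fun _ _ => Or.inl ⟨rfl, rfl⟩
  have d01 := hdisj (Sum.inl 0) (Sum.inl 1) (by decide)
  have d02 := hdisj (Sum.inl 0) (Sum.inr 0) (by decide)
  have d03 := hdisj (Sum.inl 0) (Sum.inr 1) (by decide)
  have d04 := hdisj (Sum.inl 0) (Sum.inr 2) (by decide)
  have d12 := hdisj (Sum.inl 1) (Sum.inr 0) (by decide)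
  have d13 := hdisj (Sum.inl 1) (Sum.inr 1) (by decide)
  have d14 := hdisj (Sum.inl 1) (Sum.inr 2) (by decide)
  have d23 := hdisj (Sum.inr 0) (Sum.inr 1) (by decide)
  have d24 := hdisj (Sum.inr 0) (Sum.inr 2) (by decide)
  have d34 := hdisj (Sum.inr 1) (Sum.inr 2) (by decide)
  have hcard := card_bound5 d01 d02 d03 d04 d12 d13 d14 d23 d24 d34
  have c0 := ((hok (Sum.inl 0)).1).card_pos; have c1 := ((hok (Sum.inl 1)).1).card_pos
  have c2 := ((hok (Sum.inr 0)).1).card_pos; have c3 := ((hok (Sum.inr 1)).1).card_pos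
  have c4 := ((hok (Sum.inr 2)).1).card_pos
  refine noK23decide ⟨g (Sum.inl 0), ⟨by omega, (hok _).1, (hok _).2⟩, g (Sum.inl 1),
    ⟨d01, by omega, (hok _).1, (hok _).2⟩, g (Sum.inr 0),
    ⟨d02, d12, by omega, ⟨(hok _).1, (hok _).2⟩, hadj _ _ (cb 0 0), hadj _ _ (cb 1 0)⟩,
    g (Sum.inr 1),
    ⟨d03, d13, d23, by omega, ⟨(hok _).1, (hok _).2⟩, hadj _ _ (cb 0 1), hadj _ _ (cb 1 1)⟩,
    g (Sum.inr 2),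
    d04, d14, d24, d34, ⟨(hok _).1, (hok _).2⟩, hadj _ _ (cb 0 2), hadj _ _ (cb 1 2)⟩

lemma chi : connGameChromaticNumber G6 = 4 := by
  unfold connGameChromaticNumber
  have h4' : (4 : ℕ) ∈ {k | AliceWinsColoringGame true G6 k} := h4
  refine le_antisymm (Nat.sInf_le h4') ?_
  by_contra hlt
  push_neg at hlt
  have hm := Nat.sInf_mem (⟨4, h4'⟩ : {k | AliceWinsColoringGame true G6 k}.Nonempty)
  have : sInf {k | AliceWinsColoringGame true G6 k} = 0 ∨
      sInf {k | AliceWinsColoringGame true G6 k} = 1 ∨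
      sInf {k | AliceWinsColoringGame true G6 k} = 2 ∨
      sInf {k | AliceWinsColoringGame true G6 k} = 3 := by omega
  rcases this with h | h | h | h <;> rw [h] at hm
  exacts [h0 hm, h1 hm, h2 hm, h3 hm]

end MyProof12


/-- There exists a finite connected outerplanar simple graph `G` with
connected game chromatic number exactly 4. -/
theorem exists_outerplanar_connGameChromaticNumber_eq_four :
    ∃ (V : Type) (iF : Fintype V) (iD : DecidableEq V) (G : SimpleGraph V),
      @ConnGame.Outerplanar V G ∧ G.Connected ∧
        @ConnGame.connGameChromaticNumber V iF iD G = 4 :=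
  ⟨Fin 6, inferInstance, inferInstance, MyProof12.G6,
    ⟨MyProof12.noK4, MyProof12.noK23⟩, MyProof12.G6conn, MyProof12.chi⟩
end

section
/- There exists a finite connected outerplanar simple graph G with connected game coloring number at least 4, i.e., col_cg(G) ≥ 4. -/
open scoped Classical

namespace FanGraph
open ConnGame

def G : SimpleGraph (Fin 6) := SimpleGraph.fromRel (fun i j => i = 0 ∨ (i : ℕ) + 1 = (j : ℕ))

instance : DecidableRel G.Adj := fun a b => by
  unfold G
  rw [SimpleGraph.fromRel_adj]
  infer_instance

instance instMG {V : Type} [DecidableEq V] [Fintype V] (G : SimpleGraph V) [DecidableRel G.Adj]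
    (k : ℕ) (M : Finset V) : Decidable (MarkGood G k M) :=
  decidable_of_iff (∀ v ∉ M, (M.filter fun u => G.Adj u v).card < k) (by
    unfold MarkGood
    refine forall_congr' fun v => imp_congr_right fun hv => iff_of_eq ?_
    congr!)

instance instML {V : Type} [DecidableEq V] (conn : Bool) (G : SimpleGraph V) [DecidableRel G.Adj]
    (M : Finset V) (v : V) : Decidable (MarkLegal conn G M v) := by
  unfold MarkLegal; infer_instance

instance instAW {V : Type} [DecidableEq V] [Fintype V] (conn : Bool) (G : SimpleGraph V)
    [DecidableRel G.Adj] (k : ℕ) :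
    ∀ (n : ℕ) (b : Bool) (M : Finset V), Decidable (AliceWinsMarkingFrom conn G k n b M)
  | 0, _, M => decidable_of_iff (MarkGood G k M) (by rw [AliceWinsMarkingFrom])
  | (n+1), true, M =>
    haveI : ∀ b M, Decidable (AliceWinsMarkingFrom conn G k n b M) := fun b M => instAW conn G k n b M
    decidable_of_iff (MarkGood G k M ∧
        ∃ v, MarkLegal conn G M v ∧ AliceWinsMarkingFrom conn G k n false (insert v M))
      (by rw [AliceWinsMarkingFrom]; simp)
  | (n+1), false, M =>
    haveI : ∀ b M, Decidable (AliceWinsMarkingFrom conn G k n b M) := fun b M => instAW conn G k n b M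
    decidable_of_iff (MarkGood G k M ∧
        ∀ v, MarkLegal conn G M v → AliceWinsMarkingFrom conn G k n true (insert v M))
      (by rw [AliceWinsMarkingFrom]; simp)

instance instAWG {V : Type} [DecidableEq V] [Fintype V] (conn : Bool) (G : SimpleGraph V)
    [DecidableRel G.Adj] (k : ℕ) : Decidable (AliceWinsMarkingGame conn G k) := by
  unfold AliceWinsMarkingGame; infer_instance


lemma adj_iff (u v : Fin 6) :
    G.Adj u v ↔ u ≠ v ∧ (u = 0 ∨ v = 0 ∨ (u:ℕ)+1 = (v:ℕ) ∨ (v:ℕ)+1 = (u:ℕ)) := by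
  unfold FanGraph.G at *; rw [SimpleGraph.fromRel_adj]
  exact and_congr_right fun _ => by tauto

lemma adj_consec {u v : Fin 6} (hu : u ≠ 0) (hv : v ≠ 0) (h : G.Adj u v) :
    (u:ℕ)+1 = (v:ℕ) ∨ (v:ℕ)+1 = (u:ℕ) := by
  rcases (adj_iff u v).mp h with ⟨-, h⟩; tauto

lemma Gconn : G.Connected := by
  rw [SimpleGraph.connected_iff]
  refine ⟨?_, ⟨0⟩⟩
  have h : ∀ w : Fin 6, w ≠ 0 → G.Adj 0 w := fun w hw =>
    (adj_iff 0 w).mpr ⟨Ne.symm hw, Or.inl rfl⟩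
  intro u v
  by_cases hu : u = 0 <;> by_cases hv : v = 0
  · rw [hu, hv]
  · rw [hu]; exact (h v hv).reachable
  · rw [hv]; exact ((h u hu).symm).reachable
  · exact ((h u hu).symm).reachable.trans (h v hv).reachable

lemma walk_between {s : Set (Fin 6)} (h0 : (0:Fin 6) ∉ s) :
    ∀ {x y : ↥s} (p : (G.induce s).Walk x y) (n : ℕ),
      (((x:Fin 6):ℕ) ≤ n ∧ n ≤ ((y:Fin 6):ℕ)) ∨ (((y:Fin 6):ℕ) ≤ n ∧ n ≤ ((x:Fin 6):ℕ)) →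
      ∃ z ∈ p.support, ((z : Fin 6):ℕ) = n := by
  intro x y p
  induction p with
  | nil =>
    intro n hn
    simp only [SimpleGraph.Walk.support_nil, List.mem_singleton]
    exact ⟨_, rfl, by omega⟩
  | @cons a w y hadj q ih =>
    intro n hn
    have hGa : G.Adj (a : Fin 6) (w : Fin 6) := hadj
    have ha0 : (a : Fin 6) ≠ 0 := fun h => h0 (h ▸ a.2)
    have hw0 : (w : Fin 6) ≠ 0 := fun h => h0 (h ▸ w.2)
    have hstep := adj_consec ha0 hw0 hGa
    by_cases hna : ((a : Fin 6):ℕ) = n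
    · exact ⟨a, by simp, hna⟩
    · have h' : (((w:Fin 6):ℕ) ≤ n ∧ n ≤ ((y:Fin 6):ℕ)) ∨
          (((y:Fin 6):ℕ) ≤ n ∧ n ≤ ((w:Fin 6):ℕ)) := by omega
      obtain ⟨z, hz, hzn⟩ := ih n h'
      exact ⟨z, by simp [hz], hzn⟩

lemma interval_fill {s : Set (Fin 6)} (h0 : (0:Fin 6) ∉ s) (hc : (G.induce s).Connected) :
    ∀ a ∈ s, ∀ b ∈ s, ∀ n : ℕ, (a:ℕ) ≤ n → n ≤ (b:ℕ) → ∃ c ∈ s, (c:ℕ) = n := by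
  intro a ha b hb n h1 h2
  obtain ⟨p⟩ := hc.preconnected ⟨a, ha⟩ ⟨b, hb⟩
  obtain ⟨z, _, hzn⟩ := walk_between h0 p n (Or.inl ⟨h1, h2⟩)
  exact ⟨z, z.2, hzn⟩

/-- Package a hubless, nonempty, connected branch set as a numeric interval. -/
lemma spec {s : Set (Fin 6)} (h0 : (0:Fin 6) ∉ s) (hne : s.Nonempty)
    (hc : (G.induce s).Connected) :
    ∃ lo hi : ℕ, lo ≤ hi ∧ (∀ x ∈ s, lo ≤ (x:ℕ) ∧ (x:ℕ) ≤ hi) ∧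
      (∀ n, lo ≤ n → n ≤ hi → ∃ c ∈ s, (c:ℕ) = n) := by
  classical
  set T : Finset ℕ := (Finset.univ.filter (fun x : Fin 6 => x ∈ s)).image Fin.val with hT
  obtain ⟨a, ha⟩ := hne
  have hmemT : ∀ x : Fin 6, x ∈ s → (x:ℕ) ∈ T := by
    intro x hx; rw [hT]; simp only [Finset.mem_image, Finset.mem_filter]
    exact ⟨x, ⟨Finset.mem_univ x, hx⟩, rfl⟩
  have hTne : T.Nonempty := ⟨_, hmemT a ha⟩
  refine ⟨T.min' hTne, T.max' hTne, T.min'_le _ (hmemT a ha) |>.trans (T.le_max' _ (hmemT a ha)), ?_, ?_⟩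
  · intro x hx; exact ⟨T.min'_le _ (hmemT x hx), T.le_max' _ (hmemT x hx)⟩
  · intro n h1 h2
    obtain ⟨u, hu, hu2⟩ : ∃ u ∈ s, (u:ℕ) = T.min' hTne := by
      have := T.min'_mem hTne
      simp only [hT, Finset.mem_image, Finset.mem_filter] at this
      obtain ⟨u, ⟨-, hu⟩, he⟩ := this; exact ⟨u, hu, he⟩
    obtain ⟨v, hv, hv2⟩ : ∃ v ∈ s, (v:ℕ) = T.max' hTne := by
      have := T.max'_mem hTne
      simp only [hT, Finset.mem_image, Finset.mem_filter] at this
      obtain ⟨v, ⟨-, hv⟩, he⟩ := this; exact ⟨v, hv, he⟩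
    exact interval_fill h0 hc u hu v hv n (by omega) (by omega)

lemma sep {s t : Set (Fin 6)} (hd : Disjoint s t) {lo1 hi1 lo2 hi2 : ℕ}
    (hl1 : lo1 ≤ hi1) (hl2 : lo2 ≤ hi2)
    (h1 : ∀ n, lo1 ≤ n → n ≤ hi1 → ∃ c ∈ s, (c:ℕ) = n)
    (h2 : ∀ n, lo2 ≤ n → n ≤ hi2 → ∃ c ∈ t, (c:ℕ) = n) :
    hi1 < lo2 ∨ hi2 < lo1 := by
  by_contra h
  push_neg at h
  obtain ⟨c1, hc1, e1⟩ := h1 (max lo1 lo2) (le_max_left _ _) (by omega)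
  obtain ⟨c2, hc2, e2⟩ := h2 (max lo1 lo2) (le_max_right _ _) (by omega)
  have : c1 = c2 := Fin.ext (by omega)
  exact Set.disjoint_left.mp hd hc1 (this ▸ hc2)

lemma adj_wit {s t : Set (Fin 6)} (h0s : (0:Fin 6) ∉ s) (h0t : (0:Fin 6) ∉ t)
    {lo1 hi1 lo2 hi2 : ℕ}
    (b1 : ∀ x ∈ s, lo1 ≤ (x:ℕ) ∧ (x:ℕ) ≤ hi1) (b2 : ∀ x ∈ t, lo2 ≤ (x:ℕ) ∧ (x:ℕ) ≤ hi2)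
    (h : ∃ u ∈ s, ∃ v ∈ t, G.Adj u v) :
    ∃ a b : ℕ, lo1 ≤ a ∧ a ≤ hi1 ∧ lo2 ≤ b ∧ b ≤ hi2 ∧ (a+1 = b ∨ b+1 = a) := by
  obtain ⟨u, hu, v, hv, huv⟩ := h
  have := adj_consec (fun h => h0s (h ▸ hu)) (fun h => h0t (h ▸ hv)) huv
  exact ⟨u, v, (b1 u hu).1, (b1 u hu).2, (b2 v hv).1, (b2 v hv).2, this⟩

section NoMinor
variable {s1 s2 s3 s4 : Set (Fin 6)}

lemma no_triangle
    (h1 : (0:Fin 6) ∉ s1) (h2 : (0:Fin 6) ∉ s2) (h3 : (0:Fin 6) ∉ s3)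
    (n1 : s1.Nonempty) (n2 : s2.Nonempty) (n3 : s3.Nonempty)
    (c1 : (G.induce s1).Connected) (c2 : (G.induce s2).Connected) (c3 : (G.induce s3).Connected)
    (d12 : Disjoint s1 s2) (d13 : Disjoint s1 s3) (d23 : Disjoint s2 s3)
    (a12 : ∃ u ∈ s1, ∃ v ∈ s2, G.Adj u v)
    (a13 : ∃ u ∈ s1, ∃ v ∈ s3, G.Adj u v)
    (a23 : ∃ u ∈ s2, ∃ v ∈ s3, G.Adj u v) : False := by
  obtain ⟨l1, r1, hlr1, b1, f1⟩ := spec h1 n1 c1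
  obtain ⟨l2, r2, hlr2, b2, f2⟩ := spec h2 n2 c2
  obtain ⟨l3, r3, hlr3, b3, f3⟩ := spec h3 n3 c3
  have s12 := sep d12 hlr1 hlr2 f1 f2
  have s13 := sep d13 hlr1 hlr3 f1 f3
  have s23 := sep d23 hlr2 hlr3 f2 f3
  obtain ⟨a, b, w12⟩ := adj_wit h1 h2 b1 b2 a12
  obtain ⟨a', c, w13⟩ := adj_wit h1 h3 b1 b3 a13
  obtain ⟨b', c', w23⟩ := adj_wit h2 h3 b2 b3 a23
  omega

lemma no_claw
    (h1 : (0:Fin 6) ∉ s1) (h2 : (0:Fin 6) ∉ s2) (h3 : (0:Fin 6) ∉ s3) (h4 : (0:Fin 6) ∉ s4)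
    (n1 : s1.Nonempty) (n2 : s2.Nonempty) (n3 : s3.Nonempty) (n4 : s4.Nonempty)
    (c1 : (G.induce s1).Connected) (c2 : (G.induce s2).Connected)
    (c3 : (G.induce s3).Connected) (c4 : (G.induce s4).Connected)
    (d12 : Disjoint s1 s2) (d13 : Disjoint s1 s3) (d14 : Disjoint s1 s4)
    (d23 : Disjoint s2 s3) (d24 : Disjoint s2 s4) (d34 : Disjoint s3 s4)
    (a12 : ∃ u ∈ s1, ∃ v ∈ s2, G.Adj u v)
    (a13 : ∃ u ∈ s1, ∃ v ∈ s3, G.Adj u v)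
    (a14 : ∃ u ∈ s1, ∃ v ∈ s4, G.Adj u v) : False := by
  obtain ⟨l1, r1, hlr1, b1, f1⟩ := spec h1 n1 c1
  obtain ⟨l2, r2, hlr2, b2, f2⟩ := spec h2 n2 c2
  obtain ⟨l3, r3, hlr3, b3, f3⟩ := spec h3 n3 c3
  obtain ⟨l4, r4, hlr4, b4, f4⟩ := spec h4 n4 c4
  have s12 := sep d12 hlr1 hlr2 f1 f2
  have s13 := sep d13 hlr1 hlr3 f1 f3
  have s14 := sep d14 hlr1 hlr4 f1 f4
  have s23 := sep d23 hlr2 hlr3 f2 f3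
  have s24 := sep d24 hlr2 hlr4 f2 f4
  have s34 := sep d34 hlr3 hlr4 f3 f4
  obtain ⟨a, b, w12⟩ := adj_wit h1 h2 b1 b2 a12
  obtain ⟨a', c, w13⟩ := adj_wit h1 h3 b1 b3 a13
  obtain ⟨a'', d, w14⟩ := adj_wit h1 h4 b1 b4 a14
  omega

lemma no_c4
    (h1 : (0:Fin 6) ∉ s1) (h2 : (0:Fin 6) ∉ s2) (h3 : (0:Fin 6) ∉ s3) (h4 : (0:Fin 6) ∉ s4)
    (n1 : s1.Nonempty) (n2 : s2.Nonempty) (n3 : s3.Nonempty) (n4 : s4.Nonempty)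
    (c1 : (G.induce s1).Connected) (c2 : (G.induce s2).Connected)
    (c3 : (G.induce s3).Connected) (c4 : (G.induce s4).Connected)
    (d12 : Disjoint s1 s2) (d13 : Disjoint s1 s3) (d14 : Disjoint s1 s4)
    (d23 : Disjoint s2 s3) (d24 : Disjoint s2 s4) (d34 : Disjoint s3 s4)
    (a13 : ∃ u ∈ s1, ∃ v ∈ s3, G.Adj u v)
    (a14 : ∃ u ∈ s1, ∃ v ∈ s4, G.Adj u v)
    (a23 : ∃ u ∈ s2, ∃ v ∈ s3, G.Adj u v)
    (a24 : ∃ u ∈ s2, ∃ v ∈ s4, G.Adj u v) : False := by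
  obtain ⟨l1, r1, hlr1, b1, f1⟩ := spec h1 n1 c1
  obtain ⟨l2, r2, hlr2, b2, f2⟩ := spec h2 n2 c2
  obtain ⟨l3, r3, hlr3, b3, f3⟩ := spec h3 n3 c3
  obtain ⟨l4, r4, hlr4, b4, f4⟩ := spec h4 n4 c4
  have s12 := sep d12 hlr1 hlr2 f1 f2
  have s13 := sep d13 hlr1 hlr3 f1 f3
  have s14 := sep d14 hlr1 hlr4 f1 f4
  have s23 := sep d23 hlr2 hlr3 f2 f3
  have s24 := sep d24 hlr2 hlr4 f2 f4
  have s34 := sep d34 hlr3 hlr4 f3 f4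
  obtain ⟨x1, y1, w13⟩ := adj_wit h1 h3 b1 b3 a13
  obtain ⟨x2, y2, w14⟩ := adj_wit h1 h4 b1 b4 a14
  obtain ⟨x3, y3, w23⟩ := adj_wit h2 h3 b2 b3 a23
  obtain ⟨x4, y4, w24⟩ := adj_wit h2 h4 b2 b4 a24
  omega

end NoMinor


lemma outerplanar : ConnGame.Outerplanar G := by
  constructor
  · rintro ⟨f, hne, hconn, hdisj, hadj⟩
    have hK : ∀ i j : Fin 4, i ≠ j → (SimpleGraph.completeGraph (Fin 4)).Adj i j := fun i j h => h
    have key : ∀ i j k : Fin 4, i ≠ j → i ≠ k → j ≠ k →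
        (0:Fin 6) ∉ f i → (0:Fin 6) ∉ f j → (0:Fin 6) ∉ f k → False := by
      intro i j k hij hik hjk hi hj hk
      exact no_triangle hi hj hk (hne i) (hne j) (hne k) (hconn i) (hconn j) (hconn k)
        (hdisj i j hij) (hdisj i k hik) (hdisj j k hjk)
        (hadj i j (hK i j hij)) (hadj i k (hK i k hik)) (hadj j k (hK j k hjk))
    have hub : ∀ i j : Fin 4, i ≠ j → (0:Fin 6) ∈ f i → (0:Fin 6) ∉ f j := fun i j hij hi hj =>
      Set.disjoint_left.mp (hdisj i j hij) hi hj
    by_cases h0 : (0:Fin 6) ∈ f 0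
    · exact key 1 2 3 (by decide) (by decide) (by decide)
        (hub 0 1 (by decide) h0) (hub 0 2 (by decide) h0) (hub 0 3 (by decide) h0)
    · by_cases h1 : (0:Fin 6) ∈ f 1
      · exact key 0 2 3 (by decide) (by decide) (by decide)
          h0 (hub 1 2 (by decide) h1) (hub 1 3 (by decide) h1)
      · by_cases h2 : (0:Fin 6) ∈ f 2
        · exact key 0 1 3 (by decide) (by decide) (by decide)
            h0 h1 (hub 2 3 (by decide) h2)
        · exact key 0 1 2 (by decide) (by decide) (by decide) h0 h1 h2
  · rintro ⟨f, hne, hconn, hdisj, hadj⟩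
    have hB : ∀ (i : Fin 2) (j : Fin 3),
        (completeBipartiteGraph (Fin 2) (Fin 3)).Adj (Sum.inl i) (Sum.inr j) :=
      fun i j => Or.inl ⟨rfl, rfl⟩
    have hub : ∀ i j, i ≠ j → (0:Fin 6) ∈ f i → (0:Fin 6) ∉ f j := fun i j hij hi hj =>
      Set.disjoint_left.mp (hdisj i j hij) hi hj
    -- the "claw" contradiction: one side vertex hubless, three hubless Y's
    have claw : ∀ (i : Fin 2), (0:Fin 6) ∉ f (Sum.inl i) →
        (∀ j : Fin 3, (0:Fin 6) ∉ f (Sum.inr j)) → False := by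
      intro i hi hYs
      exact no_claw hi (hYs 0) (hYs 1) (hYs 2)
        (hne _) (hne _) (hne _) (hne _)
        (hconn _) (hconn _) (hconn _) (hconn _)
        (hdisj _ _ (by simp)) (hdisj _ _ (by simp)) (hdisj _ _ (by simp))
        (hdisj _ _ (by simp)) (hdisj _ _ (by simp)) (hdisj _ _ (by simp))
        (hadj _ _ (hB i 0)) (hadj _ _ (hB i 1)) (hadj _ _ (hB i 2))
    -- the C4 contradiction: both X's hubless, two hubless Y's
    have c4 : ∀ (j j' : Fin 3), j ≠ j' → (0:Fin 6) ∉ f (Sum.inl 0) → (0:Fin 6) ∉ f (Sum.inl 1) →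
        (0:Fin 6) ∉ f (Sum.inr j) → (0:Fin 6) ∉ f (Sum.inr j') → False := by
      intro j j' hjj' hx0 hx1 hy hy'
      exact no_c4 hx0 hx1 hy hy'
        (hne _) (hne _) (hne _) (hne _)
        (hconn _) (hconn _) (hconn _) (hconn _)
        (hdisj _ _ (by simp)) (hdisj _ _ (by simp)) (hdisj _ _ (by simp))
        (hdisj _ _ (by simp)) (hdisj _ _ (by simp)) (hdisj _ _ (by simp [hjj']))
        (hadj _ _ (hB 0 j)) (hadj _ _ (hB 0 j')) (hadj _ _ (hB 1 j)) (hadj _ _ (hB 1 j'))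
    by_cases hx0 : (0:Fin 6) ∈ f (Sum.inl 0)
    · exact claw 1 (hub _ _ (by simp) hx0) (fun j => hub _ _ (by simp) hx0)
    · by_cases hx1 : (0:Fin 6) ∈ f (Sum.inl 1)
      · exact claw 0 (hub _ _ (by simp) hx1) (fun j => hub _ _ (by simp) hx1)
      · by_cases hy0 : (0:Fin 6) ∈ f (Sum.inr 0)
        · exact c4 1 2 (by decide) hx0 hx1 (hub _ _ (by simp) hy0) (hub _ _ (by simp) hy0)
        · by_cases hy1 : (0:Fin 6) ∈ f (Sum.inr 1)
          · exact c4 0 2 (by decide) hx0 hx1 hy0 (hub _ _ (by simp) hy1)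
          · exact c4 0 1 (by decide) hx0 hx1 hy0 hy1

end FanGraph

/-- There exists a finite connected outerplanar simple graph `G` with
connected game coloring number at least 4. -/
theorem exists_outerplanar_four_le_connGameColoringNumber :
    ∃ (V : Type) (iF : Fintype V) (iD : DecidableEq V) (G : SimpleGraph V),
      @ConnGame.Outerplanar V G ∧ G.Connected ∧
        4 ≤ @ConnGame.connGameColoringNumber V iF iD G := by
  classical
  refine ⟨Fin 6, inferInstance, inferInstance, FanGraph.G, FanGraph.outerplanar, FanGraph.Gconn, ?_⟩
  have h6 : ConnGame.AliceWinsMarkingGame true FanGraph.G 6 := by decide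
  have h0 : ¬ ConnGame.AliceWinsMarkingGame true FanGraph.G 0 := by decide
  have h1 : ¬ ConnGame.AliceWinsMarkingGame true FanGraph.G 1 := by decide
  have h2 : ¬ ConnGame.AliceWinsMarkingGame true FanGraph.G 2 := by decide
  have h3 : ¬ ConnGame.AliceWinsMarkingGame true FanGraph.G 3 := by decide
  unfold ConnGame.connGameColoringNumber
  have hne : {k | ConnGame.AliceWinsMarkingGame true FanGraph.G k}.Nonempty := ⟨6, h6⟩
  have hmem := Nat.sInf_mem hne
  set m := sInf {k | ConnGame.AliceWinsMarkingGame true FanGraph.G k} with hm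
  have hmem' : ConnGame.AliceWinsMarkingGame true FanGraph.G m := hmem
  by_contra hlt
  push_neg at hlt
  interval_cases m
  · exact h0 hmem'
  · exact h1 hmem'
  · exact h2 hmem'
  · exact h3 hmem'
end
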